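/- arXiv:2110.09645 — 6 statements merged into one kernel-verified Lean document; each statement's English description precedes it below -/
import Mathlib

section
/- Let Σ be a K×K positive definite matrix and for each nonzero binary vector m ∈ {0,1}^K let D_m be the K×n_m matrix whose columns are the standard basis vectors e_t for the indices t with m_t = 1, and V_m(Σ) = D_m (D_m^T Σ D_m)^{-1} D_m^T. If M is a random vector taking values in {0,1}^K with P(M = 1_K) > 0 (and V_m := 0 when m = 0), then E[V_M(Σ)] is positive definite. -/
open Matrix BigOperators Finset

/-- The `K × n_m` selection matrix `D_m` whose columns are the standard basis vectors
`e_t` for the indices `t` with `m t = true` (columns indexed by the subtype of such `t`). -/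
noncomputable def selMat (K : ℕ) (m : Fin K → Bool) :
    Matrix (Fin K) {t : Fin K // m t = true} ℝ :=
  Matrix.of fun i j => if i = (j : Fin K) then 1 else 0

/-- `V_m(Σ) = D_m (D_mᵀ Σ D_m)⁻¹ D_mᵀ`.  When `m = 0` the column index type is empty,
so this is the zero matrix, matching the convention `V_0(Σ) = 0`. -/
noncomputable def Vm (K : ℕ) (S : Matrix (Fin K) (Fin K) ℝ) (m : Fin K → Bool) :
    Matrix (Fin K) (Fin K) ℝ :=
  selMat K m * ((selMat K m)ᵀ * S * selMat K m)⁻¹ * (selMat K m)ᵀ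

/-- `E[V_M(Σ)] = ∑ m P(M = m) V_m(Σ)`. -/
noncomputable def EVm (K : ℕ) (S : Matrix (Fin K) (Fin K) ℝ)
    (p : (Fin K → Bool) → ℝ) : Matrix (Fin K) (Fin K) ℝ :=
  ∑ m : Fin K → Bool, p m • Vm K S m

lemma selT_mulVec (K : ℕ) (m : Fin K → Bool) (x : Fin K → ℝ) :
    (selMat K m)ᵀ *ᵥ x = fun (j : {t : Fin K // m t = true}) => x (j : Fin K) := by
  funext j
  simp [Matrix.mulVec, dotProduct, selMat, eq_comm]

lemma sel_mulVec_eq_zero (K : ℕ) (m : Fin K → Bool) (y : {t : Fin K // m t = true} → ℝ)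
    (h : (selMat K m) *ᵥ y = 0) : y = 0 := by
  funext j
  have := congrFun h (j : Fin K)
  simp only [Matrix.mulVec, dotProduct, selMat, Matrix.of_apply, Pi.zero_apply] at this
  rw [Finset.sum_eq_single j] at this
  · simpa using this
  · intro b _ hb
    have : ¬ ((j : Fin K) = (b : Fin K)) := fun h => hb (Subtype.ext h.symm)
    simp [this]
  · simp

lemma quad {ι κ : Type*} [Fintype ι] [Fintype κ] (A : Matrix ι κ ℝ) (B : Matrix ι ι ℝ)
    (x : κ → ℝ) :
    x ⬝ᵥ (Aᵀ * B * A) *ᵥ x = (A *ᵥ x) ⬝ᵥ B *ᵥ (A *ᵥ x) := by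
  rw [← Matrix.mulVec_mulVec, ← Matrix.mulVec_mulVec, dotProduct_mulVec,
    Matrix.vecMul_transpose]

lemma herm_conj {ι κ : Type*} [Fintype ι] [Fintype κ] (A : Matrix ι κ ℝ) (B : Matrix ι ι ℝ)
    (hB : B.IsHermitian) : (Aᵀ * B * A).IsHermitian := by
  have hBt : Bᵀ = B := by rw [← Matrix.conjTranspose_eq_transpose_of_trivial]; exact hB
  show _ᴴ = _
  rw [Matrix.conjTranspose_eq_transpose_of_trivial, Matrix.transpose_mul, Matrix.transpose_mul,
    Matrix.transpose_transpose, hBt, Matrix.mul_assoc]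

lemma submat_posDef (K : ℕ) (m : Fin K → Bool) (S : Matrix (Fin K) (Fin K) ℝ)
    (hS : S.PosDef) : ((selMat K m)ᵀ * S * selMat K m).PosDef := by
  rw [posDef_iff_dotProduct_mulVec]
  constructor
  · exact herm_conj _ _ hS.1
  · intro y hy
    have hz : selMat K m *ᵥ y ≠ 0 := fun h => hy (sel_mulVec_eq_zero K m y h)
    have h2 := hS.dotProduct_mulVec_pos hz
    rw [star_trivial] at h2 ⊢
    rwa [quad]

lemma Vm_quad (K : ℕ) (S : Matrix (Fin K) (Fin K) ℝ) (m : Fin K → Bool) (x : Fin K → ℝ) :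
    x ⬝ᵥ Vm K S m *ᵥ x
      = ((selMat K m)ᵀ *ᵥ x) ⬝ᵥ ((selMat K m)ᵀ * S * selMat K m)⁻¹ *ᵥ ((selMat K m)ᵀ *ᵥ x) := by
  have := quad ((selMat K m)ᵀ) (((selMat K m)ᵀ * S * selMat K m)⁻¹) x
  simpa [Vm, Matrix.transpose_transpose] using this

lemma Vm_herm (K : ℕ) (S : Matrix (Fin K) (Fin K) ℝ) (hS : S.PosDef) (m : Fin K → Bool) :
    (Vm K S m).IsHermitian := by
  have := herm_conj ((selMat K m)ᵀ) (((selMat K m)ᵀ * S * selMat K m)⁻¹)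
    (submat_posDef K m S hS).inv.1
  simpa [Vm, Matrix.transpose_transpose] using this

/-- Lemma 1(1): if `Σ` is positive definite and `M` is a random binary
vector with `P(M = 1_K) > 0`, then `E[V_M(Σ)]` is positive definite. -/
theorem stmt1 (K : ℕ) (hK : 1 ≤ K)
    (S : Matrix (Fin K) (Fin K) ℝ) (hS : S.PosDef)
    (p : (Fin K → Bool) → ℝ) (hp0 : ∀ m, 0 ≤ p m) (hp1 : ∑ m, p m = 1)
    (hfull : 0 < p (fun _ => true)) :
    (EVm K S p).PosDef := by
  rw [posDef_iff_dotProduct_mulVec]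
  constructor
  · show _ᴴ = _
    rw [EVm, Matrix.conjTranspose_sum]
    refine Finset.sum_congr rfl fun m _ => ?_
    rw [Matrix.conjTranspose_smul, star_trivial, (Vm_herm K S hS m)]
  · intro x hx
    rw [star_trivial]
    have hsum : x ⬝ᵥ (EVm K S p) *ᵥ x = ∑ m : Fin K → Bool, p m * (x ⬝ᵥ Vm K S m *ᵥ x) := by
      rw [EVm]
      have hmv : (∑ m : Fin K → Bool, p m • Vm K S m) *ᵥ x
          = ∑ m : Fin K → Bool, (p m • Vm K S m) *ᵥ x := by
        funext i
        simp only [Matrix.mulVec, dotProduct, Finset.sum_apply, Matrix.sum_apply,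
          Finset.sum_mul]
        rw [Finset.sum_comm]
      rw [hmv]
      simp only [dotProduct, Finset.sum_apply, Finset.mul_sum, Matrix.smul_mulVec,
        Pi.smul_apply, smul_eq_mul, Finset.mul_sum]
      rw [Finset.sum_comm]
      refine Finset.sum_congr rfl fun m _ => Finset.sum_congr rfl fun i _ => by ring
    rw [hsum]
    have hnn : ∀ m : Fin K → Bool, 0 ≤ p m * (x ⬝ᵥ Vm K S m *ᵥ x) := by
      intro m
      refine mul_nonneg (hp0 m) ?_
      rw [Vm_quad]
      have := (submat_posDef K m S hS).inv.posSemidef.dotProduct_mulVec_nonneg ((selMat K m)ᵀ *ᵥ x)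
      rwa [star_trivial] at this
    refine Finset.sum_pos' (fun m _ => hnn m) ⟨(fun _ => true), Finset.mem_univ _, ?_⟩
    refine mul_pos hfull ?_
    rw [Vm_quad]
    set mfull : Fin K → Bool := fun _ => true
    have hz : (selMat K mfull)ᵀ *ᵥ x ≠ 0 := by
      rw [selT_mulVec]
      intro h
      apply hx
      funext i
      have := congrFun h ⟨i, rfl⟩
      simpa using this
    have := (submat_posDef K mfull S hS).inv.dotProduct_mulVec_pos hz
    rwa [star_trivial] at this
end

section
/- With Σ K×K positive definite, K ≥ 2, the equality e_K^T E[V_M(Σ)]^{-1} e_K = P(M_K = 1)^{-1} e_K^T Σ e_K holds if and only if P(M_t = 1, M_K = 0) · σ_{t,K} = 0 for every t = 1,...,K−1, where σ_{t,K} = e_t^T Σ e_K. -/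
open Matrix BigOperators Finset

set_option linter.unusedSectionVars false
set_option maxHeartbeats 1000000

section CS
variable {ι : Type*} [Fintype ι] [DecidableEq ι] {B : Matrix ι ι ℝ}

lemma quad_nonneg (hB : B.PosDef) (u : ι → ℝ) : 0 ≤ u ⬝ᵥ B *ᵥ u := by
  have := hB.posSemidef.dotProduct_mulVec_nonneg u
  rwa [star_trivial] at this

lemma quad_zero (hB : B.PosDef) {u : ι → ℝ} (hu : u ⬝ᵥ B *ᵥ u = 0) : u = 0 := by
  by_contra h
  have := hB.dotProduct_mulVec_pos h
  rw [star_trivial, hu] at this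
  exact lt_irrefl _ this

lemma Bsym (hB : B.PosDef) : Bᵀ = B := by
  ext i j
  simpa using congrFun (congrFun hB.1 i) j

lemma quad_sym (hB : B.PosDef) (x y : ι → ℝ) : x ⬝ᵥ B *ᵥ y = y ⬝ᵥ B *ᵥ x := by
  rw [Matrix.dotProduct_mulVec, ← Matrix.mulVec_transpose, Bsym hB, dotProduct_comm]

lemma cs_aux (hB : B.PosDef) (w e : ι → ℝ) :
    ((e ⬝ᵥ B *ᵥ e) • w - (e ⬝ᵥ B *ᵥ w) • e) ⬝ᵥ B *ᵥ ((e ⬝ᵥ B *ᵥ e) • w - (e ⬝ᵥ B *ᵥ w) • e)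
      = (e ⬝ᵥ B *ᵥ e) * ((e ⬝ᵥ B *ᵥ e) * (w ⬝ᵥ B *ᵥ w) - (e ⬝ᵥ B *ᵥ w) ^ 2) := by
  simp only [Matrix.mulVec_sub, Matrix.mulVec_smul, sub_dotProduct,
    smul_dotProduct, dotProduct_sub, dotProduct_smul, smul_eq_mul]
  rw [quad_sym hB w e]
  ring

lemma cs_ineq (hB : B.PosDef) (w e : ι → ℝ) (he : 0 < e ⬝ᵥ B *ᵥ e) :
    (e ⬝ᵥ B *ᵥ w) ^ 2 ≤ (e ⬝ᵥ B *ᵥ e) * (w ⬝ᵥ B *ᵥ w) := by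
  have h := quad_nonneg hB ((e ⬝ᵥ B *ᵥ e) • w - (e ⬝ᵥ B *ᵥ w) • e)
  rw [cs_aux hB w e] at h
  nlinarith

lemma cs_eq (hB : B.PosDef) (w e : ι → ℝ) (he : 0 < e ⬝ᵥ B *ᵥ e)
    (h : (e ⬝ᵥ B *ᵥ w) ^ 2 = (e ⬝ᵥ B *ᵥ e) * (w ⬝ᵥ B *ᵥ w)) :
    w = ((e ⬝ᵥ B *ᵥ w) / (e ⬝ᵥ B *ᵥ e)) • e := by
  have h0 : ((e ⬝ᵥ B *ᵥ e) • w - (e ⬝ᵥ B *ᵥ w) • e) ⬝ᵥ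
      B *ᵥ ((e ⬝ᵥ B *ᵥ e) • w - (e ⬝ᵥ B *ᵥ w) • e) = 0 := by
    rw [cs_aux hB w e, h]; ring
  have hz := quad_zero hB h0
  have hz' := sub_eq_zero.mp hz
  funext j
  have hj := congrFun hz' j
  simp only [Pi.smul_apply, smul_eq_mul] at hj ⊢
  field_simp
  linarith [hj]

lemma BmulVecInv (hB : B.PosDef) (u : ι → ℝ) : B *ᵥ (B⁻¹ *ᵥ u) = u := by
  rw [Matrix.mulVec_mulVec, Matrix.mul_nonsing_inv _ hB.det_pos.ne'.isUnit, Matrix.one_mulVec]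

lemma quad_lb_data (hB : B.PosDef) (u : ι → ℝ) (k : ι) :
    (Pi.single k (1:ℝ)) ⬝ᵥ B *ᵥ (B⁻¹ *ᵥ u) = u k
    ∧ (Pi.single k (1:ℝ)) ⬝ᵥ B *ᵥ (Pi.single k (1:ℝ)) = B k k
    ∧ (B⁻¹ *ᵥ u) ⬝ᵥ B *ᵥ (B⁻¹ *ᵥ u) = u ⬝ᵥ B⁻¹ *ᵥ u := by
  refine ⟨?_, ?_, ?_⟩
  · rw [BmulVecInv hB, single_dotProduct, one_mul]
  · rw [Matrix.mulVec_single_one, single_dotProduct]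
    simp
  · rw [BmulVecInv hB, dotProduct_comm]

lemma diag_pos (hB : B.PosDef) (k : ι) : 0 < B k k := by
  have h := hB.dotProduct_mulVec_pos (x := Pi.single k (1:ℝ)) (fun h0 => by simpa using congrFun h0 k)
  rw [star_trivial] at h
  rwa [(quad_lb_data hB 0 k).2.1] at h

lemma quad_lb (hB : B.PosDef) (u : ι → ℝ) (k : ι) :
    (u k) ^ 2 ≤ B k k * (u ⬝ᵥ B⁻¹ *ᵥ u) := by
  obtain ⟨h1, h2, h3⟩ := quad_lb_data hB u k
  have := cs_ineq hB (B⁻¹ *ᵥ u) (Pi.single k 1) (by rw [h2]; exact diag_pos hB k)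
  rwa [h1, h2, h3] at this

lemma quad_lb_eq (hB : B.PosDef) (u : ι → ℝ) (k : ι)
    (h : (u k) ^ 2 = B k k * (u ⬝ᵥ B⁻¹ *ᵥ u)) :
    ∀ j, u j = (u k / B k k) * B j k := by
  obtain ⟨h1, h2, h3⟩ := quad_lb_data hB u k
  have hw := cs_eq hB (B⁻¹ *ᵥ u) (Pi.single k 1) (by rw [h2]; exact diag_pos hB k)
    (by rw [h1, h2, h3]; exact h)
  rw [h1, h2] at hw
  intro j
  have : u = B *ᵥ ((u k / B k k) • (Pi.single k 1 : ι → ℝ)) := by rw [← hw, BmulVecInv hB]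
  rw [this, Matrix.mulVec_smul]
  simp only [Pi.smul_apply, Matrix.mulVec_single_one, Matrix.col_apply, mul_one, smul_eq_mul]
  have hkk : B k k ≠ 0 := (diag_pos hB k).ne'
  field_simp

end CS

variable {K : ℕ} {S : Matrix (Fin K) (Fin K) ℝ} {m : Fin K → Bool}

lemma selMat_t_mulVec (x : Fin K → ℝ) :
    (selMat K m)ᵀ *ᵥ x = fun j : {t : Fin K // m t = true} => x (j : Fin K) := by
  funext j
  simp [selMat, Matrix.mulVec, dotProduct, Matrix.transpose_apply, eq_comm]

lemma selMat_mulVec (y : {t : Fin K // m t = true} → ℝ) (i : Fin K) :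
    (selMat K m *ᵥ y) i = if h : m i = true then y ⟨i, h⟩ else 0 := by
  simp only [selMat, Matrix.mulVec, dotProduct, Matrix.of_apply]
  by_cases h : m i = true
  · rw [dif_pos h, Finset.sum_eq_single ⟨i, h⟩]
    · simp
    · intro b _ hb
      rw [if_neg, zero_mul]
      rintro rfl; exact hb rfl
    · simp
  · rw [dif_neg h, Finset.sum_eq_zero]
    intro b _
    rw [if_neg, zero_mul]
    rintro rfl; exact h b.2

lemma selMat_B_eq : (selMat K m)ᵀ * S * selMat K m = S.submatrix (Subtype.val) (Subtype.val) := by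
  ext j j'
  simp [Matrix.mul_apply, selMat, Finset.sum_ite_eq, eq_comm]

lemma B_apply (j j' : {t : Fin K // m t = true}) :
    ((selMat K m)ᵀ * S * selMat K m) j j' = S (j : Fin K) (j' : Fin K) := by
  rw [selMat_B_eq]; rfl

lemma dot_sel (x : {t : Fin K // m t = true} → ℝ) :
    x ⬝ᵥ (((selMat K m)ᵀ * S * selMat K m) *ᵥ x)
      = (selMat K m *ᵥ x) ⬝ᵥ (S *ᵥ (selMat K m *ᵥ x)) := by
  rw [← Matrix.mulVec_mulVec, ← Matrix.mulVec_mulVec, Matrix.dotProduct_mulVec x,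
    Matrix.vecMul_transpose]

lemma B_posDef (hS : S.PosDef) : ((selMat K m)ᵀ * S * selMat K m).PosDef := by
  refine Matrix.posDef_iff_dotProduct_mulVec.mpr ⟨?_, ?_⟩
  · have h := hS.isHermitian
    rw [selMat_B_eq]
    ext j j'
    simpa using congrFun (congrFun h (j : Fin K)) (j' : Fin K)
  · intro x hx
    have hsx : star x = x := by funext i; simp
    rw [hsx, dot_sel]
    have hy : selMat K m *ᵥ x ≠ 0 := by
      obtain ⟨j, hj⟩ := Function.ne_iff.mp hx
      intro h0
      have h1 := congrFun h0 (j : Fin K)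
      rw [selMat_mulVec, dif_pos j.2] at h1
      simp only [Pi.zero_apply] at h1
      exact hj (by simpa using h1)
    have := hS.dotProduct_mulVec_pos hy
    rwa [star_trivial] at this

lemma Vm_mulVec (x : Fin K → ℝ) :
    Vm K S m *ᵥ x
      = selMat K m *ᵥ (((selMat K m)ᵀ * S * selMat K m)⁻¹ *ᵥ ((selMat K m)ᵀ *ᵥ x)) := by
  rw [Vm, ← Matrix.mulVec_mulVec, ← Matrix.mulVec_mulVec]

lemma quad_Vm (x : Fin K → ℝ) :
    x ⬝ᵥ (Vm K S m *ᵥ x)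
      = ((selMat K m)ᵀ *ᵥ x) ⬝ᵥ (((selMat K m)ᵀ * S * selMat K m)⁻¹ *ᵥ ((selMat K m)ᵀ *ᵥ x)) := by
  rw [Vm_mulVec, Matrix.dotProduct_mulVec x, ← Matrix.mulVec_transpose]

lemma sum_mulVec {ι : Type*} (t : Finset ι) (f : ι → Matrix (Fin K) (Fin K) ℝ) (x : Fin K → ℝ) :
    (∑ i ∈ t, f i) *ᵥ x = ∑ i ∈ t, f i *ᵥ x := by
  funext j
  simp only [Matrix.mulVec, dotProduct, Matrix.sum_apply, Finset.sum_apply,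
    Finset.sum_mul]
  rw [Finset.sum_comm]

lemma Vm_mulVec_col (hS : S.PosDef) {k : Fin K} (h : m k = true) :
    Vm K S m *ᵥ (fun i => S i k) = Pi.single k 1 := by
  rw [Vm_mulVec]
  have hu : (selMat K m)ᵀ *ᵥ (fun i => S i k)
      = ((selMat K m)ᵀ * S * selMat K m) *ᵥ (Pi.single ⟨k, h⟩ 1) := by
    rw [selMat_t_mulVec, Matrix.mulVec_single_one]
    funext j
    rw [Matrix.col_apply, B_apply]
  rw [hu]
  have hinv : (((selMat K m)ᵀ * S * selMat K m)⁻¹ *ᵥ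
      (((selMat K m)ᵀ * S * selMat K m) *ᵥ (Pi.single ⟨k, h⟩ 1)))
      = Pi.single ⟨k, h⟩ 1 := by
    rw [Matrix.mulVec_mulVec, Matrix.nonsing_inv_mul _ (B_posDef hS).det_pos.ne'.isUnit,
      Matrix.one_mulVec]
  rw [hinv]
  funext i
  rw [selMat_mulVec]
  by_cases hi : m i = true
  · rw [dif_pos hi]
    by_cases hik : i = k
    · subst hik
      simp [Subtype.ext_iff]
    · rw [Pi.single_eq_of_ne (by simp [Subtype.ext_iff, hik]), Pi.single_eq_of_ne hik]
  · have hik : i ≠ k := fun hh => hi (hh ▸ h)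
    rw [dif_neg hi, Pi.single_eq_of_ne hik]

lemma Vm_mulVec_zero {x : Fin K → ℝ} (hu : ∀ t, m t = true → x t = 0) :
    Vm K S m *ᵥ x = 0 := by
  rw [Vm_mulVec]
  have h0 : (selMat K m)ᵀ *ᵥ x = 0 := by
    rw [selMat_t_mulVec]
    funext j
    exact hu _ j.2
  rw [h0, Matrix.mulVec_zero, Matrix.mulVec_zero]

lemma dotProduct_finset_sum {ι : Type*} (t : Finset ι) (f : ι → (Fin K → ℝ)) (x : Fin K → ℝ) :
    x ⬝ᵥ (∑ i ∈ t, f i) = ∑ i ∈ t, x ⬝ᵥ f i := by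
  simp only [dotProduct, Finset.sum_apply, Finset.mul_sum]
  rw [Finset.sum_comm]

lemma quad_EVm (p : (Fin K → Bool) → ℝ) (x : Fin K → ℝ) :
    x ⬝ᵥ (EVm K S p *ᵥ x) = ∑ m : Fin K → Bool, p m * (x ⬝ᵥ Vm K S m *ᵥ x) := by
  rw [EVm, _root_.sum_mulVec, dotProduct_finset_sum]
  refine Finset.sum_congr rfl fun m _ => ?_
  rw [Matrix.smul_mulVec, dotProduct_smul, smul_eq_mul]

lemma Vm_transpose (hS : S.PosDef) : (Vm K S m)ᵀ = Vm K S m := by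
  rw [Vm, Matrix.transpose_mul, Matrix.transpose_mul, Matrix.transpose_transpose,
    Matrix.transpose_nonsing_inv, Bsym (B_posDef hS)]
  simp only [Matrix.mul_assoc]

lemma EVm_posDef {p : (Fin K → Bool) → ℝ} (hS : S.PosDef) (hp0 : ∀ m, 0 ≤ p m)
    (hfull : 0 < p (fun _ => true)) : (EVm K S p).PosDef := by
  refine Matrix.posDef_iff_dotProduct_mulVec.mpr ⟨?_, ?_⟩
  · show (EVm K S p)ᴴ = EVm K S p
    have : (EVm K S p)ᴴ = (EVm K S p)ᵀ := by
      ext i j; simp [Matrix.conjTranspose_apply]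
    rw [this, EVm, Matrix.transpose_sum]
    refine Finset.sum_congr rfl fun m _ => ?_
    rw [Matrix.transpose_smul, Vm_transpose hS]
  · intro x hx
    rw [star_trivial, quad_EVm]
    have hterm : ∀ m : Fin K → Bool, 0 ≤ p m * (x ⬝ᵥ Vm K S m *ᵥ x) := fun m => by
      refine mul_nonneg (hp0 m) ?_
      rw [quad_Vm]
      exact quad_nonneg (B_posDef hS).inv _
    have hfullterm : 0 < p (fun _ => true) * (x ⬝ᵥ Vm K S (fun _ => true) *ᵥ x) := by
      refine mul_pos hfull ?_
      rw [quad_Vm]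
      refine lt_of_le_of_ne (quad_nonneg (B_posDef hS).inv _) (Ne.symm ?_)
      intro h0
      have hu0 := quad_zero (B_posDef hS).inv h0
      rw [selMat_t_mulVec] at hu0
      obtain ⟨j, hj⟩ := Function.ne_iff.mp hx
      exact hj (by simpa using congrFun hu0 ⟨j, rfl⟩)
    calc (0:ℝ) < p (fun _ => true) * (x ⬝ᵥ Vm K S (fun _ => true) *ᵥ x) := hfullterm
      _ ≤ ∑ m : Fin K → Bool, p m * (x ⬝ᵥ Vm K S m *ᵥ x) :=
        Finset.single_le_sum (fun m _ => hterm m) (Finset.mem_univ _)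

theorem main_aux {K : ℕ} {S : Matrix (Fin K) (Fin K) ℝ} (hS : S.PosDef)
    {p : (Fin K → Bool) → ℝ} (hp0 : ∀ m, 0 ≤ p m)
    (hfull : 0 < p (fun _ => true)) (k : Fin K) :
    (EVm K S p)⁻¹ k k
        = (∑ m ∈ Finset.univ.filter (fun m => m k = true), p m)⁻¹ * S k k
      ↔ ∀ t : Fin K, t ≠ k →
          (∑ m ∈ Finset.univ.filter (fun m => m t = true ∧ m k = false), p m)
            * S t k = 0 := by
  have hP : 0 < ∑ m ∈ Finset.univ.filter (fun m => m k = true), p m := by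
    refine lt_of_lt_of_le hfull (Finset.single_le_sum (fun m _ => hp0 m) ?_)
    simp
  have hSkk : 0 < S k k := diag_pos hS k
  have hA : (EVm K S p).PosDef := EVm_posDef hS hp0 hfull
  have hAdet : IsUnit (EVm K S p).det := hA.det_pos.ne'.isUnit
  have hxk : ((EVm K S p)⁻¹ *ᵥ Pi.single k 1) k = (EVm K S p)⁻¹ k k := by
    rw [Matrix.mulVec_single_one]
    simp
  have hAmulx : EVm K S p *ᵥ ((EVm K S p)⁻¹ *ᵥ Pi.single k 1) = Pi.single k 1 := by
    rw [Matrix.mulVec_mulVec, Matrix.mul_nonsing_inv _ hAdet, Matrix.one_mulVec]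
  constructor
  · intro heq
    have hxk2 : ((EVm K S p)⁻¹ *ᵥ Pi.single k 1) k
        = (∑ m ∈ Finset.univ.filter (fun m => m k = true), p m)⁻¹ * S k k := by
      rw [hxk]; exact heq
    have hT : ((EVm K S p)⁻¹ *ᵥ Pi.single k 1) ⬝ᵥ
        (EVm K S p *ᵥ ((EVm K S p)⁻¹ *ᵥ Pi.single k 1))
        = ((EVm K S p)⁻¹ *ᵥ Pi.single k 1) k := by
      rw [hAmulx, dotProduct_single, mul_one]
    set x : Fin K → ℝ := (EVm K S p)⁻¹ *ᵥ Pi.single k 1 with hxdef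
    have hsum : ∑ m : Fin K → Bool, p m * (x ⬝ᵥ Vm K S m *ᵥ x) = x k := by
      rw [← quad_EVm]; exact hT
    have hlbsum : ∑ m : Fin K → Bool,
        p m * (if m k = true then (x k)^2 / S k k else 0) = x k := by
      simp only [mul_ite, mul_zero]
      rw [Finset.sum_ite, Finset.sum_const_zero, add_zero, ← Finset.sum_mul, hxk2]
      field_simp
    have hdiff0 : ∀ m ∈ Finset.univ (α := Fin K → Bool),
        0 ≤ p m * (x ⬝ᵥ Vm K S m *ᵥ x)
          - p m * (if m k = true then (x k)^2 / S k k else 0) := by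
      intro m _
      refine sub_nonneg.mpr (mul_le_mul_of_nonneg_left ?_ (hp0 m))
      by_cases hmk : m k = true
      · rw [if_pos hmk, quad_Vm]
        have hlb := quad_lb (B_posDef hS (m := m)) ((selMat K m)ᵀ *ᵥ x) ⟨k, hmk⟩
        rw [B_apply] at hlb
        have huk : ((selMat K m)ᵀ *ᵥ x) ⟨k, hmk⟩ = x k := by
          rw [selMat_t_mulVec]
        rw [huk] at hlb
        rw [div_le_iff₀ hSkk]
        linarith
      · rw [if_neg hmk, quad_Vm]
        exact quad_nonneg (B_posDef hS).inv _
    have hdsum : ∑ m : Fin K → Bool,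
        (p m * (x ⬝ᵥ Vm K S m *ᵥ x)
          - p m * (if m k = true then (x k)^2 / S k k else 0)) = 0 := by
      rw [Finset.sum_sub_distrib, hsum, hlbsum, sub_self]
    have hzero := (Finset.sum_eq_zero_iff_of_nonneg hdiff0).mp hdsum
    have hfq : x ⬝ᵥ Vm K S (fun _ => true) *ᵥ x = (x k)^2 / S k k := by
      have h := hzero (fun _ => true) (Finset.mem_univ _)
      rw [if_pos rfl] at h
      exact mul_left_cancel₀ hfull.ne' (sub_eq_zero.mp h)
    have hxprop : ∀ t, x t = (x k / S k k) * S t k := by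
      have hueq : ((((selMat K (fun _ => true))ᵀ *ᵥ x)) ⟨k, rfl⟩)^2
          = ((selMat K (fun _ => true))ᵀ * S * selMat K (fun _ => true)) ⟨k,rfl⟩ ⟨k,rfl⟩
            * (((selMat K (fun _ => true))ᵀ *ᵥ x) ⬝ᵥ
               ((selMat K (fun _ => true))ᵀ * S * selMat K (fun _ => true))⁻¹
                 *ᵥ ((selMat K (fun _ => true))ᵀ *ᵥ x)) := by
        rw [B_apply, ← quad_Vm, hfq]
        have huk : ((selMat K (fun _ => true))ᵀ *ᵥ x) ⟨k, rfl⟩ = x k := by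
          rw [selMat_t_mulVec]
        rw [huk]
        field_simp
      have hall := quad_lb_eq (B_posDef hS) _ ⟨k, rfl⟩ hueq
      intro t
      have ht := hall ⟨t, rfl⟩
      simp only [B_apply] at ht
      have hut : ((selMat K (fun _ => true))ᵀ *ᵥ x) ⟨t, rfl⟩ = x t := by
        rw [selMat_t_mulVec]
      have huk : ((selMat K (fun _ => true))ᵀ *ᵥ x) ⟨k, rfl⟩ = x k := by
        rw [selMat_t_mulVec]
      rw [hut, huk] at ht
      exact ht
    intro t htk
    by_cases hSt : S t k = 0
    · rw [hSt, mul_zero]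
    · refine mul_eq_zero.mpr (Or.inl (Finset.sum_eq_zero ?_))
      intro m hm
      simp only [Finset.mem_filter, Finset.mem_univ, true_and] at hm
      obtain ⟨hmt, hmk⟩ := hm
      by_contra hpm
      have hpm' : 0 < p m := lt_of_le_of_ne (hp0 m) (Ne.symm hpm)
      have hmk' : ¬ m k = true := by rw [hmk]; simp
      have hqm : x ⬝ᵥ Vm K S m *ᵥ x = 0 := by
        have h := hzero m (Finset.mem_univ _)
        rw [if_neg hmk', mul_zero, sub_zero] at h
        exact (mul_eq_zero.mp h).resolve_left hpm
      have hu0 : (selMat K m)ᵀ *ᵥ x = 0 := by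
        refine quad_zero (B_posDef hS).inv ?_
        rw [← quad_Vm]
        exact hqm
      have hxt : x t = 0 := by
        have hc := congrFun hu0 ⟨t, hmt⟩
        rw [selMat_t_mulVec] at hc
        exact hc
      have hcontr := hxprop t
      rw [hxt] at hcontr
      rcases mul_eq_zero.mp hcontr.symm with h | h
      · rcases div_eq_zero_iff.mp h with h' | h'
        · have hxkpos : 0 < x k := by
            rw [hxk2]
            positivity
          linarith
        · exact hSkk.ne' h'
      · exact hSt h
  · intro hcond
    -- A *ᵥ s = P • e_k
    have hAs : EVm K S p *ᵥ (fun i => S i k)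
        = (∑ m ∈ Finset.univ.filter (fun m => m k = true), p m) • (Pi.single k 1 : Fin K → ℝ) := by
      rw [EVm, _root_.sum_mulVec]
      have hterm : ∀ m : Fin K → Bool,
          (p m • Vm K S m) *ᵥ (fun i => S i k)
            = if m k = true then p m • (Pi.single k 1 : Fin K → ℝ) else 0 := by
        intro m
        rw [Matrix.smul_mulVec]
        by_cases hmk : m k = true
        · rw [if_pos hmk, Vm_mulVec_col hS hmk]
        · rw [if_neg hmk]
          by_cases hpm : p m = 0
          · rw [hpm, zero_smul]
          · have hpm' : 0 < p m := lt_of_le_of_ne (hp0 m) (Ne.symm hpm)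
            have hz : ∀ t, m t = true → S t k = 0 := by
              intro t ht
              have htk : t ≠ k := by
                rintro rfl; exact hmk ht
              have hc := hcond t htk
              by_contra hSt
              have hmem : m ∈ Finset.univ.filter
                  (fun m' => m' t = true ∧ m' k = false) := by
                simp only [Finset.mem_filter, Finset.mem_univ, true_and]
                exact ⟨ht, Bool.not_eq_true _ |>.mp hmk⟩
              have hle : p m ≤ ∑ m' ∈ Finset.univ.filter
                  (fun m' => m' t = true ∧ m' k = false), p m' :=
                Finset.single_le_sum (fun m' _ => hp0 m') hmem
              have hsum0 : (∑ m' ∈ Finset.univ.filter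
                  (fun m' => m' t = true ∧ m' k = false), p m') = 0 := by
                rcases mul_eq_zero.mp hc with h | h
                · exact h
                · exact absurd h hSt
              linarith
            rw [Vm_mulVec_zero hz, smul_zero]
      rw [Finset.sum_congr rfl (fun m _ => hterm m), Finset.sum_ite,
        Finset.sum_const_zero, add_zero, ← Finset.sum_smul]
    have hsx : (∑ m ∈ Finset.univ.filter (fun m => m k = true), p m)
        • ((EVm K S p)⁻¹ *ᵥ Pi.single k 1) = (fun i => S i k) := by
      have h1 : (EVm K S p)⁻¹ *ᵥ (EVm K S p *ᵥ (fun i => S i k)) = (fun i => S i k) := by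
        rw [Matrix.mulVec_mulVec, Matrix.nonsing_inv_mul _ hAdet, Matrix.one_mulVec]
      rw [hAs, Matrix.mulVec_smul] at h1
      exact h1
    have h2 := congrFun hsx k
    simp only [Pi.smul_apply, smul_eq_mul] at h2
    rw [hxk] at h2
    rw [← h2]
    field_simp

/-- Lemma 1(2), equality condition: for `K ≥ 2` (here `K+2`), the equality
`e_Kᵀ E[V_M(Σ)]⁻¹ e_K = P(M_K = 1)⁻¹ e_Kᵀ Σ e_K` holds if and only if
`P(M_t = 1, M_K = 0) · σ_{t,K} = 0` for every `t ≠ K`. -/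
theorem stmt3 (K : ℕ)
    (S : Matrix (Fin (K+2)) (Fin (K+2)) ℝ) (hS : S.PosDef)
    (p : (Fin (K+2) → Bool) → ℝ) (hp0 : ∀ m, 0 ≤ p m) (hp1 : ∑ m, p m = 1)
    (hfull : 0 < p (fun _ => true)) :
    (EVm (K+2) S p)⁻¹ (Fin.last (K+1)) (Fin.last (K+1))
        = (∑ m ∈ Finset.univ.filter (fun m => m (Fin.last (K+1)) = true), p m)⁻¹
          * S (Fin.last (K+1)) (Fin.last (K+1))
      ↔ ∀ t : Fin (K+2), t ≠ Fin.last (K+1) →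
          (∑ m ∈ Finset.univ.filter
              (fun m => m t = true ∧ m (Fin.last (K+1)) = false), p m)
            * S t (Fin.last (K+1)) = 0 := by
  exact main_aux hS hp0 hfull (Fin.last (K+1))
end

section
/- Let Σ, C be K×K positive definite matrices with C − Σ positive semi-definite, and M a random binary vector with P(M = 1_K) > 0. Then e_K^T (E[V_M(C)]^{-1} − E[V_M(Σ)]^{-1}) e_K ≥ e_K^T (C − Σ) e_K. -/
open Matrix BigOperators Finset

namespace Stmt7Aux

attribute [local instance] Matrix.linftyOpNormedAddCommGroup Matrix.linftyOpNormedSpace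
  Matrix.linftyOpNormedRing Matrix.linftyOpNormedAlgebra

/-- real symmetric implies Hermitian -/
lemma herm_of_symm {ι : Type*} [Fintype ι] {M : Matrix ι ι ℝ} (h : Mᵀ = M) :
    M.IsHermitian := by
  rw [Matrix.IsHermitian, Matrix.conjTranspose_eq_transpose_of_trivial, h]

lemma symm_of_posDef {ι : Type*} [Fintype ι] {M : Matrix ι ι ℝ} (h : M.PosDef) :
    Mᵀ = M := by
  rw [← Matrix.conjTranspose_eq_transpose_of_trivial, h.1.eq]

lemma star_id (ι : Type*) [Fintype ι] (x : ι → ℝ) : star x = x :=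
  funext fun _ => star_trivial _

section basic
variable {ι κ : Type*} [Fintype ι] [Fintype κ]

lemma quad_sandwich (B : Matrix ι ι ℝ) (D : Matrix ι κ ℝ) (x : κ → ℝ) :
    x ⬝ᵥ ((Dᵀ * B * D) *ᵥ x) = (D *ᵥ x) ⬝ᵥ (B *ᵥ (D *ᵥ x)) := by
  rw [Matrix.mul_assoc, ← Matrix.mulVec_mulVec, Matrix.dotProduct_mulVec x Dᵀ,
    Matrix.vecMul_transpose, ← Matrix.mulVec_mulVec]

omit [Fintype κ] in
lemma sum_mulVec {s : Finset κ} (f : κ → Matrix ι ι ℝ) (x : ι → ℝ) :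
    (∑ m ∈ s, f m) *ᵥ x = ∑ m ∈ s, f m *ᵥ x :=
  map_sum (AddMonoidHom.mk' (fun A : Matrix ι ι ℝ => A *ᵥ x)
    (fun A B => Matrix.add_mulVec A B x)) f s

omit [Fintype κ] in
lemma sum_dot {s : Finset κ} (g : κ → ι → ℝ) (y : ι → ℝ) :
    (∑ m ∈ s, g m) ⬝ᵥ y = ∑ m ∈ s, g m ⬝ᵥ y :=
  map_sum (AddMonoidHom.mk' (fun v : ι → ℝ => v ⬝ᵥ y)
    (fun v w => add_dotProduct v w y)) g s

omit [Fintype κ] in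
lemma dot_sum {s : Finset κ} (g : κ → ι → ℝ) (y : ι → ℝ) :
    y ⬝ᵥ (∑ m ∈ s, g m) = ∑ m ∈ s, y ⬝ᵥ g m :=
  map_sum (AddMonoidHom.mk' (fun v : ι → ℝ => y ⬝ᵥ v)
    (fun v w => dotProduct_add y v w)) g s

lemma dotProduct_self_pos {x : ι → ℝ} (hx : x ≠ 0) : 0 < x ⬝ᵥ x := by
  rcases Function.ne_iff.mp hx with ⟨i, hi⟩
  have h1 : ∀ j ∈ Finset.univ, 0 ≤ x j * x j := fun j _ => mul_self_nonneg _
  have h2 : 0 < x i * x i := mul_self_pos.mpr hi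
  exact Finset.sum_pos' h1 ⟨i, Finset.mem_univ i, h2⟩

lemma quad_nonneg {Δ : Matrix ι ι ℝ} (hΔ : Δ.PosSemidef) (v : ι → ℝ) :
    0 ≤ v ⬝ᵥ (Δ *ᵥ v) := by
  have := hΔ.dotProduct_mulVec_nonneg v; rwa [star_id] at this

lemma quad_symm {Δ : Matrix ι ι ℝ} (hΔ : Δᵀ = Δ) (v w : ι → ℝ) :
    v ⬝ᵥ (Δ *ᵥ w) = w ⬝ᵥ (Δ *ᵥ v) := by
  rw [Matrix.dotProduct_mulVec, ← Matrix.mulVec_transpose, hΔ, dotProduct_comm]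

lemma smul_posSemidef {Δ : Matrix ι ι ℝ} {t : ℝ} (ht : 0 ≤ t) (h : Δ.PosSemidef) :
    (t • Δ).PosSemidef := by
  refine Matrix.PosSemidef.of_dotProduct_mulVec_nonneg ?_ ?_
  · apply herm_of_symm
    rw [Matrix.transpose_smul, ← Matrix.conjTranspose_eq_transpose_of_trivial, h.1.eq]
  · intro x
    rw [star_id, Matrix.smul_mulVec, dotProduct_smul, smul_eq_mul]
    exact mul_nonneg ht (quad_nonneg h x)

lemma entry_quad (Q G : Matrix ι ι ℝ) (hQ : Qᵀ = Q) (k : ι) :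
    (Q * G * Q) k k = (fun j => Q j k) ⬝ᵥ (G *ᵥ (fun j => Q j k)) := by
  calc (Q * G * Q) k k = ∑ j, (∑ i, Q k i * G i j) * Q j k := by
        simp [Matrix.mul_apply]
    _ = ∑ j, ∑ i, Q k i * G i j * Q j k := by simp [Finset.sum_mul]
    _ = ∑ i, ∑ j, Q k i * G i j * Q j k := Finset.sum_comm
    _ = ∑ i, Q i k * ∑ j, G i j * Q j k := by
        refine Finset.sum_congr rfl fun i _ => ?_
        rw [Finset.mul_sum]
        refine Finset.sum_congr rfl fun j _ => ?_
        have hki : Q k i = Q i k := by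
          have := congrFun (congrFun hQ k) i
          rw [Matrix.transpose_apply] at this
          exact this.symm
        rw [hki]; ring
    _ = (fun j => Q j k) ⬝ᵥ (G *ᵥ (fun j => Q j k)) := by
        simp [dotProduct, Matrix.mulVec]

lemma jensen {Δ : Matrix ι ι ℝ} (hΔ : Δ.PosSemidef) (p : κ → ℝ) (hp0 : ∀ m, 0 ≤ p m)
    (hp1 : ∑ m, p m = 1) (z : κ → ι → ℝ) :
    (∑ m, p m • z m) ⬝ᵥ (Δ *ᵥ (∑ m, p m • z m)) ≤ ∑ m, p m * (z m ⬝ᵥ (Δ *ᵥ z m)) := by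
  set zbar := ∑ m, p m • z m with hzbar
  have hΔs : Δᵀ = Δ := by
    rw [← Matrix.conjTranspose_eq_transpose_of_trivial, hΔ.1.eq]
  have e1 : ∑ m, p m * (z m ⬝ᵥ (Δ *ᵥ zbar)) = zbar ⬝ᵥ (Δ *ᵥ zbar) := by
    nth_rewrite 2 [hzbar]
    rw [sum_dot]
    refine Finset.sum_congr rfl fun m _ => ?_
    rw [smul_dotProduct, smul_eq_mul]
  have expand : ∀ m, p m * ((z m - zbar) ⬝ᵥ (Δ *ᵥ (z m - zbar)))
      = p m * (z m ⬝ᵥ (Δ *ᵥ z m)) - 2 * (p m * (z m ⬝ᵥ (Δ *ᵥ zbar)))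
        + p m * (zbar ⬝ᵥ (Δ *ᵥ zbar)) := by
    intro m
    rw [Matrix.mulVec_sub, dotProduct_sub, sub_dotProduct,
      sub_dotProduct, quad_symm hΔs zbar (z m)]
    ring
  have h0 : 0 ≤ ∑ m, p m * ((z m - zbar) ⬝ᵥ (Δ *ᵥ (z m - zbar))) :=
    Finset.sum_nonneg fun m _ => mul_nonneg (hp0 m) (quad_nonneg hΔ _)
  rw [Finset.sum_congr rfl (fun m _ => expand m), Finset.sum_add_distrib,
    Finset.sum_sub_distrib, ← Finset.mul_sum, e1, ← Finset.sum_mul, hp1, one_mul] at h0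
  linarith

end basic

section proj
variable {n : ℕ}

/-- the diagonal projection onto the coordinates selected by `m` -/
noncomputable def Pm (m : Fin n → Bool) : Matrix (Fin n) (Fin n) ℝ :=
  Matrix.diagonal (fun i => if m i then 1 else 0)

/-- `Em m B = Pm B Pm + (1 - Pm)` -/
noncomputable def Em (m : Fin n → Bool) (B : Matrix (Fin n) (Fin n) ℝ) :
    Matrix (Fin n) (Fin n) ℝ :=
  Pm m * B * Pm m + (1 - Pm m)

variable (m : Fin n → Bool) (B : Matrix (Fin n) (Fin n) ℝ)

lemma Pm_transpose : (Pm m)ᵀ = Pm m := Matrix.diagonal_transpose _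

lemma Pm_idem : Pm m * Pm m = Pm m := by
  rw [Pm, Matrix.diagonal_mul_diagonal]
  have : (fun i => (if m i then (1:ℝ) else 0) * (if m i then 1 else 0))
      = fun i => if m i then (1:ℝ) else 0 := by
    funext i; by_cases h : m i <;> simp [h]
  rw [this]

lemma Pm_mul_selMat : Pm m * selMat n m = selMat n m := by
  ext i a
  by_cases h : i = (a : Fin n)
  · subst h
    simp [Pm, selMat, Matrix.diagonal_mul, a.2]
  · simp [Pm, selMat, Matrix.diagonal_mul, h]

lemma transpose_mul_selMat : (selMat n m)ᵀ * selMat n m = 1 := by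
  ext a b
  simp only [Matrix.mul_apply, Matrix.transpose_apply, selMat, Matrix.of_apply]
  simp only [ite_mul, one_mul, zero_mul]
  rw [Finset.sum_ite_eq' Finset.univ (a : Fin n) (fun i => if i = (b : Fin n) then (1:ℝ) else 0)]
  simp [Matrix.one_apply, Subtype.ext_iff]

lemma selMat_mul_transpose : selMat n m * (selMat n m)ᵀ = Pm m := by
  ext i j
  rw [Matrix.mul_apply]
  simp only [Matrix.transpose_apply, selMat, Matrix.of_apply, Pm, Matrix.diagonal_apply]
  by_cases hij : i = j
  · subst hij
    rw [if_pos rfl]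
    by_cases hm : m i
    · rw [Finset.sum_eq_single (⟨i, hm⟩ : {t : Fin n // m t = true})]
      · simp [hm]
      · intro b _ hb
        have hne : i ≠ (b : Fin n) := fun h => hb (Subtype.coe_injective h.symm)
        simp [hne]
      · intro h; exact absurd (Finset.mem_univ _) h
    · rw [if_neg hm]
      apply Finset.sum_eq_zero
      intro a _
      have hne : i ≠ (a : Fin n) := by
        intro h; rw [h] at hm; exact hm a.2
      simp [hne]
  · rw [if_neg hij]
    apply Finset.sum_eq_zero
    intro a _
    by_cases h1 : i = (a : Fin n)
    · have h2 : j ≠ (a : Fin n) := fun h2 => hij (h1.trans h2.symm)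
      simp [h2]
    · simp [h1]

lemma selMat_mulVec_apply (x : {t : Fin n // m t = true} → ℝ) (a : {t : Fin n // m t = true}) :
    (selMat n m *ᵥ x) (a : Fin n) = x a := by
  simp only [Matrix.mulVec, dotProduct, selMat, Matrix.of_apply, ite_mul, one_mul,
    zero_mul]
  rw [Finset.sum_eq_single a]
  · simp
  · intro b _ hb
    have hne : (a : Fin n) ≠ (b : Fin n) := fun h => hb (Subtype.coe_injective h.symm)
    simp [hne]
  · intro h; exact absurd (Finset.mem_univ _) h

lemma inner_posDef (hB : B.PosDef) : ((selMat n m)ᵀ * B * selMat n m).PosDef := by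
  refine Matrix.PosDef.of_dotProduct_mulVec_pos ?_ ?_
  · apply herm_of_symm
    rw [Matrix.transpose_mul, Matrix.transpose_mul, Matrix.transpose_transpose,
      symm_of_posDef hB, Matrix.mul_assoc]
  · intro x hx
    rw [star_id, quad_sandwich]
    have hDx : selMat n m *ᵥ x ≠ 0 := by
      intro h
      apply hx
      funext a
      have := congrFun h (a : Fin n)
      rwa [selMat_mulVec_apply, Pi.zero_apply] at this
    have := hB.dotProduct_mulVec_pos hDx
    rwa [star_id] at this

lemma Em_transpose (hBs : Bᵀ = B) : (Em m B)ᵀ = Em m B := by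
  rw [Em, Matrix.transpose_add, Matrix.transpose_sub, Matrix.transpose_one,
    Matrix.transpose_mul, Matrix.transpose_mul, Pm_transpose, hBs, Matrix.mul_assoc]

lemma Em_posDef (hB : B.PosDef) : (Em m B).PosDef := by
  refine Matrix.PosDef.of_dotProduct_mulVec_pos ?_ ?_
  · exact herm_of_symm (Em_transpose m B (symm_of_posDef hB))
  · intro x hx
    rw [star_id]
    have expand : Em m B *ᵥ x = (Pm m * B * Pm m) *ᵥ x + (x - Pm m *ᵥ x) := by
      rw [Em, Matrix.add_mulVec, Matrix.sub_mulVec, Matrix.one_mulVec]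
    rw [expand, dotProduct_add]
    have h1 : x ⬝ᵥ ((Pm m * B * Pm m) *ᵥ x) = (Pm m *ᵥ x) ⬝ᵥ (B *ᵥ (Pm m *ᵥ x)) := by
      have := quad_sandwich B (Pm m) x
      rwa [Pm_transpose] at this
    have hPP : (Pm m *ᵥ x) ⬝ᵥ (Pm m *ᵥ x) = (Pm m *ᵥ x) ⬝ᵥ x := by
      calc (Pm m *ᵥ x) ⬝ᵥ (Pm m *ᵥ x)
          = ((Pm m *ᵥ x) ᵥ* Pm m) ⬝ᵥ x := Matrix.dotProduct_mulVec _ _ _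
        _ = ((Pm m)ᵀ *ᵥ (Pm m *ᵥ x)) ⬝ᵥ x := by rw [Matrix.mulVec_transpose]
        _ = (Pm m *ᵥ x) ⬝ᵥ x := by
            rw [Pm_transpose, Matrix.mulVec_mulVec, Pm_idem]
    by_cases hPx : Pm m *ᵥ x = 0
    · have h2 : x ⬝ᵥ ((Pm m * B * Pm m) *ᵥ x) = 0 := by
        rw [h1, hPx]; simp
      have h3 : x ⬝ᵥ (x - Pm m *ᵥ x) = x ⬝ᵥ x := by rw [hPx]; simp
      rw [h2, h3, zero_add]
      exact dotProduct_self_pos hx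
    · have h2 : 0 < x ⬝ᵥ ((Pm m * B * Pm m) *ᵥ x) := by
        rw [h1]
        have := hB.dotProduct_mulVec_pos hPx
        rwa [star_id] at this
      have h3 : 0 ≤ x ⬝ᵥ (x - Pm m *ᵥ x) := by
        have hsplit : x ⬝ᵥ (x - Pm m *ᵥ x) = (x - Pm m *ᵥ x) ⬝ᵥ (x - Pm m *ᵥ x)
            + (Pm m *ᵥ x) ⬝ᵥ (x - Pm m *ᵥ x) := by
          rw [← add_dotProduct]; congr 1; abel
        rw [hsplit]
        have h4 : (Pm m *ᵥ x) ⬝ᵥ (x - Pm m *ᵥ x) = 0 := by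
          rw [dotProduct_sub, hPP, sub_self]
        rw [h4, add_zero]
        rcases eq_or_ne (x - Pm m *ᵥ x) 0 with h | h
        · rw [h]; simp
        · exact le_of_lt (dotProduct_self_pos h)
      linarith

lemma transpose_mul_Pm : (selMat n m)ᵀ * Pm m = (selMat n m)ᵀ := by
  rw [← Pm_transpose, ← Matrix.transpose_mul, Pm_mul_selMat]

lemma Vm_mul_Pm : Vm n B m * Pm m = Vm n B m := by
  rw [Vm, Matrix.mul_assoc (selMat n m * _) ((selMat n m)ᵀ) (Pm m), transpose_mul_Pm]

lemma Pm_mul_Vm : Pm m * Vm n B m = Vm n B m := by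
  rw [Vm, ← Matrix.mul_assoc, ← Matrix.mul_assoc, Pm_mul_selMat]

lemma Em_mul_Vm_add (hB : B.PosDef) : Em m B * (Vm n B m + (1 - Pm m)) = 1 := by
  have hdet : IsUnit ((selMat n m)ᵀ * B * selMat n m).det :=
    (Matrix.isUnit_iff_isUnit_det _).mp (inner_posDef m B hB).isUnit
  have hIW : ((selMat n m)ᵀ * B * selMat n m) * ((selMat n m)ᵀ * B * selMat n m)⁻¹ = 1 :=
    Matrix.mul_nonsing_inv _ hdet
  set D := selMat n m with hD
  set W := ((selMat n m)ᵀ * B * selMat n m)⁻¹ with hW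
  have t1 : Pm m * B * Pm m * (D * W * Dᵀ) = Pm m := by
    simp only [← Matrix.mul_assoc]
    rw [Matrix.mul_assoc (Pm m * B) (Pm m) D, hD, Pm_mul_selMat, ← selMat_mul_transpose m,
      Matrix.mul_assoc (selMat n m) ((selMat n m)ᵀ) B,
      Matrix.mul_assoc (selMat n m) ((selMat n m)ᵀ * B) (selMat n m),
      Matrix.mul_assoc (selMat n m) ((selMat n m)ᵀ * B * selMat n m) W, ← hD, ← Matrix.mul_assoc,
      Matrix.mul_assoc D _ W, hW, hIW, Matrix.mul_one]
  have t2 : Pm m * B * Pm m * (1 - Pm m) = 0 := by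
    rw [Matrix.mul_sub, Matrix.mul_one, Matrix.mul_assoc (Pm m * B) (Pm m) (Pm m), Pm_idem,
      sub_self]
  have t3 : (1 - Pm m) * (D * W * Dᵀ) = 0 := by
    rw [Matrix.sub_mul, Matrix.one_mul, ← Matrix.mul_assoc, ← Matrix.mul_assoc, hD,
      Pm_mul_selMat, sub_self]
  have t4 : (1 - Pm m) * (1 - Pm m) = 1 - Pm m := by
    rw [Matrix.mul_sub, Matrix.mul_one, Matrix.sub_mul, Matrix.one_mul, Pm_idem, sub_self,
      sub_zero]
  have hVm : Vm n B m = D * W * Dᵀ := rfl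
  rw [Em, Matrix.add_mul, Matrix.mul_add, Matrix.mul_add, hVm, t1, t2, t3, t4]
  abel

lemma Em_inv (hB : B.PosDef) : (Em m B)⁻¹ = Vm n B m + (1 - Pm m) :=
  Matrix.inv_eq_right_inv (Em_mul_Vm_add m B hB)

lemma Em_inv_mul_Pm (hB : B.PosDef) : (Em m B)⁻¹ * Pm m = Vm n B m := by
  rw [Em_inv m B hB, Matrix.add_mul, Matrix.sub_mul, Matrix.one_mul, Pm_idem, sub_self,
    add_zero, Vm_mul_Pm]

lemma Pm_mul_Em_inv (hB : B.PosDef) : Pm m * (Em m B)⁻¹ = Vm n B m := by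
  rw [Em_inv m B hB, Matrix.mul_add, Matrix.mul_sub, Matrix.mul_one, Pm_idem, sub_self,
    add_zero, Pm_mul_Vm]

lemma Vm_transpose (hB : B.PosDef) : (Vm n B m)ᵀ = Vm n B m := by
  rw [← Em_inv_mul_Pm m B hB, Matrix.transpose_mul, Pm_transpose,
    Matrix.transpose_nonsing_inv, Em_transpose m B (symm_of_posDef hB),
    Pm_mul_Em_inv m B hB, Em_inv_mul_Pm m B hB]

lemma Vm_posSemidef (hB : B.PosDef) : (Vm n B m).PosSemidef := by
  have h1 : (Pm m * (Em m B)⁻¹ * (Pm m)ᴴ).PosSemidef :=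
    ((Em_posDef m B hB).inv.posSemidef).mul_mul_conjTranspose_same (Pm m)
  rw [Matrix.conjTranspose_eq_transpose_of_trivial, Pm_transpose,
    Pm_mul_Em_inv m B hB, Vm_mul_Pm] at h1
  exact h1

lemma Pm_true : Pm (n := n) (fun _ => true) = 1 := by
  rw [Pm]
  simp [Matrix.diagonal_one]

lemma Vm_true (hB : B.PosDef) : Vm n B (fun _ => true) = B⁻¹ := by
  rw [← Pm_mul_Em_inv (fun _ => true) B hB, Pm_true, Matrix.one_mul, Em, Pm_true]
  simp

lemma EVm_transpose (p : (Fin n → Bool) → ℝ) (hB : B.PosDef) :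
    (EVm n B p)ᵀ = EVm n B p := by
  rw [EVm, Matrix.transpose_sum]
  refine Finset.sum_congr rfl fun m _ => ?_
  rw [Matrix.transpose_smul, Vm_transpose m B hB]

lemma EVm_posDef (p : (Fin n → Bool) → ℝ) (hp0 : ∀ m, 0 ≤ p m)
    (hfull : 0 < p (fun _ => true)) (hB : B.PosDef) : (EVm n B p).PosDef := by
  refine Matrix.PosDef.of_dotProduct_mulVec_pos ?_ ?_
  · exact herm_of_symm (EVm_transpose B p hB)
  · intro x hx
    rw [star_id, EVm, Stmt7Aux.sum_mulVec, dot_sum]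
    have hterm : ∀ m, x ⬝ᵥ ((p m • Vm n B m) *ᵥ x) = p m * (x ⬝ᵥ (Vm n B m *ᵥ x)) := by
      intro m
      rw [Matrix.smul_mulVec, dotProduct_smul, smul_eq_mul]
    have h1 : ∀ m ∈ Finset.univ, (0:ℝ) ≤ x ⬝ᵥ ((p m • Vm n B m) *ᵥ x) := by
      intro m _
      rw [hterm m]
      exact mul_nonneg (hp0 m) (quad_nonneg (Vm_posSemidef m B hB) x)
    have h2 : 0 < x ⬝ᵥ ((p (fun _ => true) • Vm n B (fun _ => true)) *ᵥ x) := by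
      rw [hterm _, Vm_true B hB]
      refine mul_pos hfull ?_
      have := hB.inv.dotProduct_mulVec_pos hx
      rwa [star_id] at this
    exact Finset.sum_pos' h1 ⟨_, Finset.mem_univ _, h2⟩

end proj

section calculus

attribute [local instance] Matrix.linftyOpNormedAddCommGroup Matrix.linftyOpNormedSpace
  Matrix.linftyOpNormedRing Matrix.linftyOpNormedAlgebra

noncomputable def sandL {a b c d : Type*} [Fintype a] [Fintype b] [Fintype c] [Fintype d]
    (P : Matrix a b ℝ) (Q : Matrix c d ℝ) : Matrix b c ℝ →L[ℝ] Matrix a d ℝ :=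
  LinearMap.toContinuousLinearMap
    { toFun := fun X => P * X * Q
      map_add' := fun X Y => by rw [Matrix.mul_add, Matrix.add_mul]
      map_smul' := fun r X => by simp [Matrix.mul_smul, Matrix.smul_mul] }

noncomputable def entL {a : Type*} [Fintype a] (k : a) : Matrix a a ℝ →L[ℝ] ℝ :=
  LinearMap.toContinuousLinearMap
    { toFun := fun X => X k k
      map_add' := fun _ _ => rfl
      map_smul' := fun _ _ => rfl }

theorem hasDerivAt_sand {a b c d : Type*} [Fintype a] [Fintype b] [Fintype c] [Fintype d]
    (P : Matrix a b ℝ) (Q : Matrix c d ℝ) {N : ℝ → Matrix b c ℝ} {N' : Matrix b c ℝ} {t : ℝ}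
    (h : HasDerivAt N N' t) :
    HasDerivAt (fun s => P * N s * Q) (P * N' * Q) t := by
  exact (sandL P Q).hasFDerivAt.comp_hasDerivAt t h

theorem hasDerivAt_entry {a : Type*} [Fintype a] (k : a)
    {N : ℝ → Matrix a a ℝ} {N' : Matrix a a ℝ} {t : ℝ} (h : HasDerivAt N N' t) :
    HasDerivAt (fun s => N s k k) (N' k k) t := by
  exact (entL k).hasFDerivAt.comp_hasDerivAt t h

theorem hasDerivAt_matinv {n : Type*} [Fintype n] [DecidableEq n]
    {N : ℝ → Matrix n n ℝ} {N' : Matrix n n ℝ} {t : ℝ}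
    (h : HasDerivAt N N' t) (hu : IsUnit (N t)) :
    HasDerivAt (fun s => (N s)⁻¹) (-((N t)⁻¹ * N' * (N t)⁻¹)) t := by
  have hf := hasFDerivAt_ringInverse (𝕜 := ℝ) hu.unit
  rw [hu.unit_spec] at hf
  have h2 := hf.comp_hasDerivAt t h
  simp only [Function.comp_def, ContinuousLinearMap.neg_apply,
    ContinuousLinearMap.mulLeftRight_apply, ← Matrix.nonsing_inv_eq_ringInverse,
    hu.unit_spec, Matrix.coe_units_inv] at h2
  exact h2

end calculus

end Stmt7Aux

attribute [local instance] Matrix.linftyOpNormedAddCommGroup Matrix.linftyOpNormedSpace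
  Matrix.linftyOpNormedRing Matrix.linftyOpNormedAlgebra


attribute [local instance] Matrix.linftyOpNormedAddCommGroup Matrix.linftyOpNormedSpace
  Matrix.linftyOpNormedRing Matrix.linftyOpNormedAlgebra

open Stmt7Aux in
/-- Lemma 1(5): if `Σ`, `C` are positive definite with `C − Σ` positive
semi-definite and `M` is a random binary vector with `P(M = 1_K) > 0`, then
`e_Kᵀ (E[V_M(C)]⁻¹ − E[V_M(Σ)]⁻¹) e_K ≥ e_Kᵀ (C − Σ) e_K`. -/
theorem stmt7 (K : ℕ)
    (S C : Matrix (Fin (K+1)) (Fin (K+1)) ℝ) (hS : S.PosDef) (hC : C.PosDef)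
    (hCS : (C - S).PosSemidef)
    (p : (Fin (K+1) → Bool) → ℝ) (hp0 : ∀ m, 0 ≤ p m) (hp1 : ∑ m, p m = 1)
    (hfull : 0 < p (fun _ => true)) :
    (C - S) (Fin.last K) (Fin.last K)
      ≤ ((EVm (K+1) C p)⁻¹ - (EVm (K+1) S p)⁻¹) (Fin.last K) (Fin.last K) := by
  classical
  set Δ : Matrix (Fin (K+1)) (Fin (K+1)) ℝ := C - S with hΔdef
  have hΔ : Δ.PosSemidef := hCS
  set k : Fin (K+1) := Fin.last K with hk
  set Bf : ℝ → Matrix (Fin (K+1)) (Fin (K+1)) ℝ := fun t => S + t • Δ with hBfdef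
  have hBf : ∀ t : ℝ, 0 ≤ t → (Bf t).PosDef :=
    fun t ht => hS.add_posSemidef (smul_posSemidef ht hΔ)
  set φ : ℝ → ℝ := fun t => (EVm (K+1) (Bf t) p)⁻¹ k k with hφdef
  set ψ : ℝ → ℝ := fun t => ((EVm (K+1) (Bf t) p)⁻¹ *
      (∑ m, p m • (Vm (K+1) (Bf t) m * Δ * Vm (K+1) (Bf t) m)) *
      (EVm (K+1) (Bf t) p)⁻¹) k k with hψdef
  have hderiv : ∀ t : ℝ, (Bf t).PosDef → HasDerivAt φ (ψ t) t := by
    intro t hBt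
    have hB1 : HasDerivAt Bf Δ t := by
      have h := ((hasDerivAt_id t).smul_const Δ).const_add S
      simp only [id, one_smul] at h
      exact h
    have hA : (EVm (K+1) (Bf t) p).PosDef := EVm_posDef (Bf t) p hp0 hfull hBt
    have hsum : HasDerivAt (fun s => EVm (K+1) (Bf s) p)
        (∑ m, p m • (-(Vm (K+1) (Bf t) m * Δ * Vm (K+1) (Bf t) m))) t := by
      apply HasDerivAt.fun_sum
      intro m _
      have hinner : HasDerivAt (fun s => (selMat (K+1) m)ᵀ * Bf s * selMat (K+1) m)
          ((selMat (K+1) m)ᵀ * Δ * selMat (K+1) m) t :=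
        hasDerivAt_sand _ _ hB1
      have hunit : IsUnit ((selMat (K+1) m)ᵀ * Bf t * selMat (K+1) m) :=
        (inner_posDef m (Bf t) hBt).isUnit
      have hinv := hasDerivAt_matinv hinner hunit
      have houter := (hasDerivAt_sand (selMat (K+1) m) ((selMat (K+1) m)ᵀ) hinv).const_smul (p m)
      convert houter using 2
      · rfl
      set D := selMat (K+1) m
      set W := ((selMat (K+1) m)ᵀ * Bf t * selMat (K+1) m)⁻¹
      show -(Vm (K+1) (Bf t) m * Δ * Vm (K+1) (Bf t) m)
          = D * -(W * (Dᵀ * Δ * D) * W) * Dᵀ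
      have hV : Vm (K+1) (Bf t) m = D * W * Dᵀ := rfl
      rw [hV]
      simp only [Matrix.mul_neg, Matrix.neg_mul, Matrix.mul_assoc]
    have hAinv := hasDerivAt_matinv hsum hA.isUnit
    have hent := hasDerivAt_entry k hAinv
    have hval : (-((EVm (K+1) (Bf t) p)⁻¹ *
        (∑ m, p m • (-(Vm (K+1) (Bf t) m * Δ * Vm (K+1) (Bf t) m))) *
        (EVm (K+1) (Bf t) p)⁻¹)) k k = ψ t := by
      simp only [hψdef]
      have hneg : (∑ m, p m • (-(Vm (K+1) (Bf t) m * Δ * Vm (K+1) (Bf t) m)))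
          = -(∑ m, p m • (Vm (K+1) (Bf t) m * Δ * Vm (K+1) (Bf t) m)) := by
        rw [← Finset.sum_neg_distrib]
        exact Finset.sum_congr rfl fun m _ => (smul_neg _ _)
      rw [hneg, Matrix.mul_neg, Matrix.neg_mul, neg_neg]
    rw [← hval]
    exact hent
  have hcont : ContinuousOn φ (Set.Icc 0 1) := fun t ht =>
    ((hderiv t (hBf t ht.1)).continuousAt).continuousWithinAt
  have hIoo : ∀ t ∈ Set.Ioo (0:ℝ) 1, HasDerivAt φ (ψ t) t :=
    fun t ht => hderiv t (hBf t ht.1.le)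
  obtain ⟨τ, hτ, hslope⟩ := exists_hasDerivAt_eq_slope φ ψ zero_lt_one hcont hIoo
  have hBC : Bf 1 = C := by
    simp only [hBfdef]
    simp [hΔdef]
  have hBS : Bf 0 = S := by
    simp only [hBfdef]
    simp
  have hφ1 : φ 1 = (EVm (K+1) C p)⁻¹ k k := by
    simp only [hφdef, hBC]
  have hφ0 : φ 0 = (EVm (K+1) S p)⁻¹ k k := by
    simp only [hφdef, hBS]
  -- lower bound the derivative at τ
  have hBτ : (Bf τ).PosDef := hBf τ hτ.1.le
  set A : Matrix (Fin (K+1)) (Fin (K+1)) ℝ := EVm (K+1) (Bf τ) p with hAdef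
  have hApd : A.PosDef := EVm_posDef _ p hp0 hfull hBτ
  have hAdet : IsUnit A.det := (Matrix.isUnit_iff_isUnit_det _).mp hApd.isUnit
  have hAinvT : (A⁻¹)ᵀ = A⁻¹ := by
    rw [Matrix.transpose_nonsing_inv, hAdef, EVm_transpose _ p hBτ]
  set x : Fin (K+1) → ℝ := fun j => A⁻¹ j k with hxdef
  have hAx : A *ᵥ x = fun i => (1 : Matrix (Fin (K+1)) (Fin (K+1)) ℝ) i k := by
    funext i
    rw [← Matrix.mul_nonsing_inv A hAdet]
    simp [Matrix.mul_apply, Matrix.mulVec, dotProduct, hxdef]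
  have hquad : ψ τ = ∑ m, p m *
      ((Vm (K+1) (Bf τ) m *ᵥ x) ⬝ᵥ (Δ *ᵥ (Vm (K+1) (Bf τ) m *ᵥ x))) := by
    simp only [hψdef, ← hAdef, ← hxdef]
    rw [entry_quad (A⁻¹) _ hAinvT k]
    simp only [← hxdef]
    rw [Stmt7Aux.sum_mulVec, dot_sum]
    refine Finset.sum_congr rfl fun m _ => ?_
    rw [Matrix.smul_mulVec, dotProduct_smul, smul_eq_mul]
    congr 1
    have hVT := Vm_transpose m (Bf τ) hBτ
    calc x ⬝ᵥ ((Vm (K+1) (Bf τ) m * Δ * Vm (K+1) (Bf τ) m) *ᵥ x)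
        = x ⬝ᵥ (((Vm (K+1) (Bf τ) m)ᵀ * Δ * Vm (K+1) (Bf τ) m) *ᵥ x) := by rw [hVT]
      _ = (Vm (K+1) (Bf τ) m *ᵥ x) ⬝ᵥ (Δ *ᵥ (Vm (K+1) (Bf τ) m *ᵥ x)) :=
          quad_sandwich Δ (Vm (K+1) (Bf τ) m) x
  have hz : ∑ m, p m • (Vm (K+1) (Bf τ) m *ᵥ x) = A *ᵥ x := by
    rw [hAdef, EVm, Stmt7Aux.sum_mulVec]
    exact Finset.sum_congr rfl fun m _ => (Matrix.smul_mulVec _ _ _).symm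
  have hjen := jensen hΔ p hp0 hp1 (fun m => Vm (K+1) (Bf τ) m *ᵥ x)
  rw [hz, hAx] at hjen
  have he : (fun i => (1 : Matrix (Fin (K+1)) (Fin (K+1)) ℝ) i k) ⬝ᵥ
      (Δ *ᵥ fun i => (1 : Matrix (Fin (K+1)) (Fin (K+1)) ℝ) i k) = Δ k k := by
    simp [dotProduct, Matrix.mulVec, Matrix.one_apply, ite_mul, mul_ite,
      mul_one, mul_zero, zero_mul, one_mul]
  rw [he, ← hquad] at hjen
  have hfin : φ 1 - φ 0 = ψ τ := by
    rw [hslope]; ring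
  rw [Matrix.sub_apply, ← hφ1, ← hφ0, hfin]
  exact hjen
end

section
/- Let Σ be K×K positive definite (K ≥ 2) partitioned with upper-left block Σ_{-K,-K} of size (K−1)×(K−1), off-diagonal column Σ_{-K,K}, and scalar σ = e_K^T Σ e_K. For a binary vector m with m_K = 1 and at least one other entry equal to 1, writing D_m in block form with last row (0,...,0,1), the matrix V_m(Σ) = D_m(D_m^T Σ D_m)^{-1} D_m^T has block form [[A_m, −σ^{-1} A_m Σ_{-K,K}], [−σ^{-1} Σ_{-K,K}^T A_m, σ^{-1} + σ^{-2} Σ_{-K,K}^T A_m Σ_{-K,K}]], where A_m = D̃_m (D̃_m^T (Σ_{-K,-K} − Σ_{-K,K} Σ_{-K,K}^T/σ) D̃_m)^{-1} D̃_m^T and D̃_m is the selection matrix for the ones of m among the first K−1 coordinates. -/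
open Matrix BigOperators Finset

section helpers

lemma sandwich_eq (K : ℕ) (m : Fin K → Bool) (S : Matrix (Fin K) (Fin K) ℝ) :
    (selMat K m)ᵀ * S * selMat K m
      = S.submatrix (fun a : {t : Fin K // m t = true} => (a : Fin K))
          (fun a : {t : Fin K // m t = true} => (a : Fin K)) := by
  ext a b
  simp [Matrix.mul_apply, selMat, transpose_apply, ite_mul, mul_ite]

lemma sandwich_apply (K : ℕ) (m : Fin K → Bool)
    (X : Matrix {t : Fin K // m t = true} {t : Fin K // m t = true} ℝ)
    (i j : Fin K) :
    (selMat K m * X * (selMat K m)ᵀ) i j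
      = if hi : m i = true then (if hj : m j = true then X ⟨i, hi⟩ ⟨j, hj⟩ else 0) else 0 := by
  have h1 : ∀ (i : Fin K) (b : {t : Fin K // m t = true}),
      (selMat K m * X) i b = if hi : m i = true then X ⟨i, hi⟩ b else 0 := by
    intro i b
    rw [Matrix.mul_apply]
    by_cases hi : m i = true
    · rw [dif_pos hi]
      rw [Finset.sum_eq_single ⟨i, hi⟩]
      · simp [selMat]
      · intro a _ ha
        have : i ≠ (a : Fin K) := fun h => ha (Subtype.ext h.symm)
        simp [selMat, this]
      · simp
    · rw [dif_neg hi]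
      refine Finset.sum_eq_zero fun a _ => ?_
      have : i ≠ (a : Fin K) := fun h => hi (h ▸ a.2)
      simp [selMat, this]
  rw [Matrix.mul_apply]
  by_cases hj : m j = true
  · rw [Finset.sum_eq_single ⟨j, hj⟩]
    · rw [h1]; simp [selMat, hj]
    · intro a _ ha
      have : j ≠ (a : Fin K) := fun h => ha (Subtype.ext h.symm)
      simp [selMat, this]
    · simp
  · refine (Finset.sum_eq_zero fun a _ => ?_).trans (by simp [hj])
    have : j ≠ (a : Fin K) := fun h => hj (h ▸ a.2)
    simp [selMat, this]

lemma Vm_apply (K : ℕ) (m : Fin K → Bool) (S : Matrix (Fin K) (Fin K) ℝ) (i j : Fin K) :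
    Vm K S m i j
      = if hi : m i = true then
          (if hj : m j = true then
            (S.submatrix (fun a : {t : Fin K // m t = true} => (a : Fin K))
              (fun a : {t : Fin K // m t = true} => (a : Fin K)))⁻¹ ⟨i, hi⟩ ⟨j, hj⟩
          else 0)
        else 0 := by
  rw [Vm, sandwich_eq, sandwich_apply]

lemma posdef_submatrix_inj {n m : Type*} [Fintype n] [Fintype m] [DecidableEq n] [DecidableEq m]
    {M : Matrix n n ℝ} (hM : M.PosDef) {e : m → n} (he : Function.Injective e) :
    (M.submatrix e e).PosDef := by
  refine posDef_iff_dotProduct_mulVec.mpr ⟨?_, ?_⟩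
  · exact hM.1.submatrix e
  · intro x hx
    set y : n → ℝ := fun a => ∑ i, if a = e i then x i else 0 with hy
    have hy_e : ∀ i, y (e i) = x i := by
      intro i
      simp [hy, he.eq_iff]
    have hy0 : y ≠ 0 := by
      intro h0
      apply hx
      funext i
      have := congrFun h0 (e i)
      simpa [hy_e] using this
    have key : star x ⬝ᵥ (M.submatrix e e *ᵥ x) = star y ⬝ᵥ (M *ᵥ y) := by
      simp only [star_trivial, dotProduct, mulVec, submatrix_apply]
      have hMy : ∀ a, (∑ b, M a b * y b) = ∑ j, M a (e j) * x j := by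
        intro a
        simp only [hy, mul_sum, mul_ite, mul_zero]
        rw [Finset.sum_comm]
        refine Finset.sum_congr rfl fun j _ => ?_
        simp
      simp only [hMy]
      have : ∀ g : n → ℝ, (∑ a, y a * g a) = ∑ i, x i * g (e i) := by
        intro g
        simp only [hy, sum_mul, ite_mul, zero_mul]
        rw [Finset.sum_comm]
        refine Finset.sum_congr rfl fun i _ => ?_
        simp
      rw [this fun a => ∑ j, M a (e j) * x j]
    rw [key]
    exact hM.dotProduct_mulVec_pos hy0

lemma posdef_schur₂₂ {m n : Type*} [Fintype m] [DecidableEq m] [Fintype n] [DecidableEq n]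
    {A : Matrix m m ℝ} {B : Matrix m n ℝ} {D : Matrix n n ℝ}
    (h : (fromBlocks A B Bᴴ D).PosDef) (hD : D.PosDef) :
    (A - B * D⁻¹ * Bᴴ).PosDef := by
  haveI := hD.isUnit.invertible
  refine posDef_iff_dotProduct_mulVec.mpr ⟨?_, ?_⟩
  · exact (Matrix.IsHermitian.fromBlocks₂₂ A B hD.1).mp h.1
  · intro x hx
    have hv : (x ⊕ᵥ (-((D⁻¹ * Bᴴ) *ᵥ x))) ≠ 0 := by
      intro h0
      apply hx
      funext i
      exact congrFun h0 (Sum.inl i)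
    have h2 := h.dotProduct_mulVec_pos hv
    rw [dotProduct_mulVec] at h2
    rw [Matrix.schur_complement_eq₂₂ A B x _ hD.1] at h2
    simp only [add_neg_cancel, star_zero, zero_vecMul, zero_dotProduct, zero_add] at h2
    rwa [dotProduct_mulVec]

lemma sum_dite_subtype {K : ℕ} (p : Fin K → Bool) (f : {t : Fin K // p t = true} → ℝ) :
    (∑ j : Fin K, if h : p j = true then f ⟨j, h⟩ else 0)
      = ∑ b : {t : Fin K // p t = true}, f b := by
  classical
  rw [← Finset.sum_filter_of_ne (p := fun j => p j = true)
      (fun x _ hx => by by_contra h; exact hx (dif_neg h))]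
  rw [Finset.sum_subtype (p := fun j => p j = true)
      (Finset.univ.filter fun j => p j = true) (by simp)
      (fun j => if h : p j = true then f ⟨j, h⟩ else 0)]
  exact Finset.sum_congr rfl fun b _ => by simp [b.2]

def sumEquiv (K : ℕ) (m : Fin (K+1) → Bool) (hmK : m (Fin.last K) = true) :
    ({t : Fin K // m t.castSucc = true} ⊕ Unit) ≃ {t : Fin (K+1) // m t = true} where
  toFun := Sum.elim (fun a => ⟨a.1.castSucc, a.2⟩) (fun _ => ⟨Fin.last K, hmK⟩)
  invFun x := if h : (x : Fin (K+1)) = Fin.last K then Sum.inr () else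
    Sum.inl ⟨(x : Fin (K+1)).castPred h, by rw [Fin.castSucc_castPred]; exact x.2⟩
  left_inv := by
    rintro (a | ⟨⟩)
    · have hne : (a.1.castSucc : Fin (K+1)) ≠ Fin.last K := (Fin.castSucc_lt_last a.1).ne
      simp [hne]
    · simp
  right_inv x := by
    by_cases h : (x : Fin (K+1)) = Fin.last K
    · simp only [dif_pos h]; exact Subtype.ext h.symm
    · simp only [dif_neg h]; exact Subtype.ext (Fin.castSucc_castPred _ h)

def finSumUnit (K : ℕ) : (Fin K ⊕ Unit) ≃ Fin (K+1) where
  toFun := Sum.elim Fin.castSucc (fun _ => Fin.last K)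
  invFun x := if h : x = Fin.last K then Sum.inr () else Sum.inl (x.castPred h)
  left_inv := by
    rintro (a | ⟨⟩)
    · have hne : (a.castSucc : Fin (K+1)) ≠ Fin.last K := (Fin.castSucc_lt_last a).ne
      simp [hne]
    · simp
  right_inv x := by
    by_cases h : x = Fin.last K
    · simp only [dif_pos h]; exact h.symm
    · simp only [dif_neg h]; exact Fin.castSucc_castPred _ h

end helpers

/-- block form of `V_m(Σ)` for a pattern `m` with `m_K = 1` and at least
one other entry equal to `1`.  With `σ = Σ_{K,K}`, `c = Σ_{-K,K}`,
`A_m = D̃_m (D̃_mᵀ (Σ_{-K,-K} − c cᵀ/σ) D̃_m)⁻¹ D̃_mᵀ` (built here from the restricted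
pattern `m'` via `Vm` applied to the Schur complement), the blocks of `V_m(Σ)` are
`A_m`, `−σ⁻¹ A_m c`, `−σ⁻¹ cᵀ A_m`, and `σ⁻¹ + σ⁻² cᵀ A_m c`. -/
theorem stmt11 (K : ℕ)
    (S : Matrix (Fin (K+1)) (Fin (K+1)) ℝ) (hS : S.PosDef)
    (m : Fin (K+1) → Bool) (hmK : m (Fin.last K) = true)
    (hm : ∃ t : Fin K, m t.castSucc = true) :
    let σ : ℝ := S (Fin.last K) (Fin.last K)
    let c : Fin K → ℝ := fun i => S i.castSucc (Fin.last K)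
    let Ssub : Matrix (Fin K) (Fin K) ℝ := S.submatrix Fin.castSucc Fin.castSucc
    let m' : Fin K → Bool := fun t => m t.castSucc
    let Am : Matrix (Fin K) (Fin K) ℝ :=
      Vm K (Ssub - σ⁻¹ • Matrix.vecMulVec c c) m'
    (∀ i j : Fin K, Vm (K+1) S m i.castSucc j.castSucc = Am i j) ∧
    (∀ i : Fin K, Vm (K+1) S m i.castSucc (Fin.last K) = -σ⁻¹ * (Am *ᵥ c) i) ∧
    (∀ j : Fin K, Vm (K+1) S m (Fin.last K) j.castSucc = -σ⁻¹ * (c ᵥ* Am) j) ∧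
    Vm (K+1) S m (Fin.last K) (Fin.last K) = σ⁻¹ + σ⁻¹ ^ 2 * (c ⬝ᵥ Am *ᵥ c) := by
  intro σ c Ssub m' Am
  have hsym : ∀ i j, S i j = S j i := fun i j => (hS.1.apply i j).symm.trans (star_trivial _)
  have hσpos : 0 < σ := by
    have hx : (Pi.single (Fin.last K) 1 : Fin (K+1) → ℝ) ≠ 0 := by
      intro h0
      have := congrFun h0 (Fin.last K)
      simp at this
    have h2 := hS.dotProduct_mulVec_pos hx
    simpa [dotProduct, mulVec, Pi.single_apply, mul_ite, ite_mul] using h2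
  set D1 : Matrix Unit Unit ℝ := Matrix.of fun _ _ => σ with hD1
  set Dinv : Matrix Unit Unit ℝ := Matrix.of fun _ _ => σ⁻¹ with hDinvdef
  have hD1inv : D1⁻¹ = Dinv := by
    refine Matrix.inv_eq_right_inv ?_
    ext u v
    cases u; cases v
    simp [hD1, hDinvdef, Matrix.mul_apply, Matrix.one_apply, mul_inv_cancel₀ hσpos.ne']
  haveI hD1I : Invertible D1 := invertibleOfRightInverse _ Dinv (by
    ext u v
    cases u; cases v
    simp [hD1, hDinvdef, Matrix.mul_apply, Matrix.one_apply, mul_inv_cancel₀ hσpos.ne'])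
  have hD1pd : D1.PosDef := by
    refine posDef_iff_dotProduct_mulVec.mpr ⟨?_, ?_⟩
    · ext u v; cases u; cases v; simp [hD1]
    · intro x hx
      have hx0 : x () ≠ 0 := fun h => hx (funext fun u => by cases u; exact h)
      have h1 : 0 < x () * x () := mul_self_pos.mpr hx0
      simp only [dotProduct, mulVec, Finset.univ_unique, Finset.sum_singleton, star_trivial, hD1]
      simp only [Matrix.of_apply]
      nlinarith
  set c2 : Matrix (Fin K) Unit ℝ := Matrix.of fun i _ => c i with hc2
  have hre : S.submatrix (finSumUnit K) (finSumUnit K) = fromBlocks Ssub c2 c2ᴴ D1 := by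
    ext a b
    rcases a with a | ⟨⟩ <;> rcases b with b | ⟨⟩
    · rfl
    · rfl
    · simp only [submatrix_apply, fromBlocks_apply₂₁, conjTranspose_apply, hc2, Matrix.of_apply,
        star_trivial]
      exact hsym _ _
    · rfl
  set X : Matrix (Fin K) (Fin K) ℝ := Ssub - σ⁻¹ • Matrix.vecMulVec c c with hX
  have hXpd : X.PosDef := by
    have h1 : (S.submatrix (finSumUnit K) (finSumUnit K)).PosDef :=
      posdef_submatrix_inj hS (finSumUnit K).injective
    rw [hre] at h1
    have h2 := posdef_schur₂₂ h1 hD1pd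
    have h3 : Ssub - c2 * D1⁻¹ * c2ᴴ = X := by
      rw [hD1inv, hX]
      ext i j
      simp only [Matrix.sub_apply, Matrix.mul_apply, Finset.univ_unique, Finset.sum_singleton,
        hc2, hDinvdef, Matrix.of_apply, conjTranspose_apply, star_trivial,
        Matrix.smul_apply, Matrix.vecMulVec_apply, smul_eq_mul]
      ring
    rwa [h3] at h2
  -- block decomposition of the restricted matrix
  set Bm : Matrix {t : Fin (K+1) // m t = true} {t : Fin (K+1) // m t = true} ℝ :=
    S.submatrix (fun a : {t : Fin (K+1) // m t = true} => (a : Fin (K+1)))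
      (fun a : {t : Fin (K+1) // m t = true} => (a : Fin (K+1))) with hBm
  set G : Matrix {t : Fin K // m t.castSucc = true} {t : Fin K // m t.castSucc = true} ℝ :=
    (X.submatrix (fun a : {t : Fin K // m t.castSucc = true} => (a : Fin K))
      (fun a : {t : Fin K // m t.castSucc = true} => (a : Fin K)))⁻¹ with hGdef
  set A1 : Matrix {t : Fin K // m t.castSucc = true} {t : Fin K // m t.castSucc = true} ℝ :=
    Matrix.of fun a b => S (a : Fin K).castSucc (b : Fin K).castSucc with hA1
  set B1 : Matrix {t : Fin K // m t.castSucc = true} Unit ℝ :=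
    Matrix.of fun a _ => c (a : Fin K) with hB1
  set e2 := sumEquiv K m hmK with he2
  have hblk : Bm.submatrix e2 e2 = fromBlocks A1 B1 B1ᴴ D1 := by
    ext a b
    rcases a with a | ⟨⟩ <;> rcases b with b | ⟨⟩
    · rfl
    · rfl
    · simp only [submatrix_apply, fromBlocks_apply₂₁, conjTranspose_apply, hB1, hBm,
        Matrix.of_apply, star_trivial]
      exact hsym _ _
    · rfl
  have hXsub_pd : (X.submatrix (fun a : {t : Fin K // m t.castSucc = true} => (a : Fin K))
      (fun a : {t : Fin K // m t.castSucc = true} => (a : Fin K))).PosDef :=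
    posdef_submatrix_inj hXpd Subtype.val_injective
  have hSch : A1 - B1 * ⅟D1 * B1ᴴ
      = X.submatrix (fun a : {t : Fin K // m t.castSucc = true} => (a : Fin K))
          (fun a : {t : Fin K // m t.castSucc = true} => (a : Fin K)) := by
    rw [invOf_eq_nonsing_inv, hD1inv]
    ext a b
    simp only [Matrix.sub_apply, Matrix.mul_apply, Finset.univ_unique, Finset.sum_singleton,
      hA1, hB1, hDinvdef, Matrix.of_apply, conjTranspose_apply, star_trivial,
      submatrix_apply, hX, Matrix.smul_apply, Matrix.vecMulVec_apply, smul_eq_mul]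
    unfold Ssub
    simp only [submatrix_apply]
    ring
  haveI hSchI : Invertible (A1 - B1 * ⅟D1 * B1ᴴ) := by
    rw [hSch]; exact hXsub_pd.isUnit.invertible
  haveI hFI : Invertible (fromBlocks A1 B1 B1ᴴ D1) :=
    Matrix.fromBlocks₂₂Invertible A1 B1 B1ᴴ D1
  have hFinv : (fromBlocks A1 B1 B1ᴴ D1)⁻¹
      = fromBlocks G (-(G * B1 * Dinv)) (-(Dinv * B1ᴴ * G))
          (Dinv + Dinv * B1ᴴ * G * B1 * Dinv) := by
    have e1' : (⅟(A1 - B1 * ⅟D1 * B1ᴴ) : Matrix _ _ ℝ) = G := by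
      rw [invOf_eq_nonsing_inv, hSch, hGdef]
    have e2' : (⅟D1 : Matrix Unit Unit ℝ) = Dinv := by rw [invOf_eq_nonsing_inv, hD1inv]
    rw [← invOf_eq_nonsing_inv, Matrix.invOf_fromBlocks₂₂_eq, e1', e2']
  have hBmInv : Bm⁻¹.submatrix e2 e2
      = fromBlocks G (-(G * B1 * Dinv)) (-(Dinv * B1ᴴ * G))
          (Dinv + Dinv * B1ᴴ * G * B1 * Dinv) := by
    rw [← hFinv, ← hblk]
    exact (Matrix.inv_submatrix_equiv Bm e2 e2).symm
  have hBe11 : ∀ a b : {t : Fin K // m t.castSucc = true},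
      Bm⁻¹ (e2 (Sum.inl a)) (e2 (Sum.inl b)) = G a b := by
    intro a b
    have h := congrFun (congrFun hBmInv (Sum.inl a)) (Sum.inl b)
    simpa using h
  have hBe12 : ∀ a : {t : Fin K // m t.castSucc = true},
      Bm⁻¹ (e2 (Sum.inl a)) (e2 (Sum.inr ())) = (-(G * B1 * Dinv)) a () := by
    intro a
    have h := congrFun (congrFun hBmInv (Sum.inl a)) (Sum.inr ())
    simpa using h
  have hBe21 : ∀ b : {t : Fin K // m t.castSucc = true},
      Bm⁻¹ (e2 (Sum.inr ())) (e2 (Sum.inl b)) = (-(Dinv * B1ᴴ * G)) () b := by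
    intro b
    have h := congrFun (congrFun hBmInv (Sum.inr ())) (Sum.inl b)
    simpa using h
  have hBe22 : Bm⁻¹ (e2 (Sum.inr ())) (e2 (Sum.inr ()))
      = (Dinv + Dinv * B1ᴴ * G * B1 * Dinv) () () := by
    have h := congrFun (congrFun hBmInv (Sum.inr ())) (Sum.inr ())
    simpa using h
  have hAmEntry : ∀ i j : Fin K, Am i j
      = if hi : m i.castSucc = true then
          (if hj : m j.castSucc = true then G ⟨i, hi⟩ ⟨j, hj⟩ else 0) else 0 := by
    intro i j
    exact Vm_apply K m' (Ssub - σ⁻¹ • Matrix.vecMulVec c c) i j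
  have hVap : ∀ i j : Fin (K+1), Vm (K+1) S m i j
      = if hi : m i = true then (if hj : m j = true then Bm⁻¹ ⟨i, hi⟩ ⟨j, hj⟩ else 0) else 0 := by
    intro i j
    exact Vm_apply (K+1) m S i j
  refine ⟨?_, ?_, ?_, ?_⟩
  · -- top-left block
    intro i j
    rw [hVap, hAmEntry]
    by_cases hi : m i.castSucc = true
    · by_cases hj : m j.castSucc = true
      · rw [dif_pos hi, dif_pos hj, dif_pos hi, dif_pos hj]
        exact hBe11 ⟨i, hi⟩ ⟨j, hj⟩
      · rw [dif_pos hi, dif_pos hi, dif_neg hj, dif_neg hj]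
    · rw [dif_neg hi, dif_neg hi]
  · -- top-right block
    intro i
    rw [hVap]
    by_cases hi : m i.castSucc = true
    · rw [dif_pos hi, dif_pos hmK]
      have hL : Bm⁻¹ ⟨i.castSucc, hi⟩ ⟨Fin.last K, hmK⟩ = (-(G * B1 * Dinv)) ⟨i, hi⟩ () :=
        hBe12 ⟨i, hi⟩
      rw [hL]
      have hmv : (Am *ᵥ c) i
          = ∑ b : {t : Fin K // m t.castSucc = true}, G ⟨i, hi⟩ b * c (b : Fin K) := by
        show (∑ j, Am i j * c j) = _
        have h1 : (∑ j, Am i j * c j)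
            = ∑ j, (if h : m j.castSucc = true then G ⟨i, hi⟩ ⟨j, h⟩ * c j else 0) := by
          refine Finset.sum_congr rfl fun j _ => ?_
          rw [hAmEntry, dif_pos hi]
          by_cases hj : m j.castSucc = true
          · rw [dif_pos hj, dif_pos hj]
          · rw [dif_neg hj, dif_neg hj, zero_mul]
        rw [h1]
        exact sum_dite_subtype (fun t => m t.castSucc) (fun b => G ⟨i, hi⟩ b * c (b : Fin K))
      rw [hmv]
      simp only [Matrix.neg_apply, Matrix.mul_apply, Finset.univ_unique, Finset.sum_singleton,
        hB1, hDinvdef, Matrix.of_apply]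
      ring
    · rw [dif_neg hi]
      have h0 : (Am *ᵥ c) i = 0 := by
        show (∑ j, Am i j * c j) = 0
        refine Finset.sum_eq_zero fun j _ => ?_
        rw [hAmEntry, dif_neg hi, zero_mul]
      rw [h0, mul_zero]
  · -- bottom-left block
    intro j
    rw [hVap]
    by_cases hj : m j.castSucc = true
    · rw [dif_pos hmK, dif_pos hj]
      have hL : Bm⁻¹ ⟨Fin.last K, hmK⟩ ⟨j.castSucc, hj⟩ = (-(Dinv * B1ᴴ * G)) () ⟨j, hj⟩ :=
        hBe21 ⟨j, hj⟩
      rw [hL]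
      have hmv : (c ᵥ* Am) j
          = ∑ a : {t : Fin K // m t.castSucc = true}, c (a : Fin K) * G a ⟨j, hj⟩ := by
        show (∑ i, c i * Am i j) = _
        have h1 : (∑ i, c i * Am i j)
            = ∑ i, (if h : m i.castSucc = true then c i * G ⟨i, h⟩ ⟨j, hj⟩ else 0) := by
          refine Finset.sum_congr rfl fun i _ => ?_
          rw [hAmEntry]
          by_cases hi : m i.castSucc = true
          · rw [dif_pos hi, dif_pos hi, dif_pos hj]
          · rw [dif_neg hi, dif_neg hi, mul_zero]
        rw [h1]
        exact sum_dite_subtype (fun t => m t.castSucc) (fun a => c (a : Fin K) * G a ⟨j, hj⟩)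
      rw [hmv]
      simp only [Matrix.neg_apply, Matrix.mul_apply, Finset.univ_unique, Finset.sum_singleton,
        hB1, hDinvdef, Matrix.of_apply, conjTranspose_apply, star_trivial]
      rw [neg_mul, Finset.mul_sum]
      congr 1
      refine Finset.sum_congr rfl fun a _ => by ring
    · rw [dif_pos hmK, dif_neg hj]
      have h0 : (c ᵥ* Am) j = 0 := by
        show (∑ i, c i * Am i j) = 0
        refine Finset.sum_eq_zero fun i _ => ?_
        rw [hAmEntry]
        by_cases hi : m i.castSucc = true
        · rw [dif_pos hi, dif_neg hj, mul_zero]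
        · rw [dif_neg hi, mul_zero]
      rw [h0, mul_zero]
  · -- bottom-right block
    rw [hVap, dif_pos hmK, dif_pos hmK]
    have hL : Bm⁻¹ ⟨Fin.last K, hmK⟩ ⟨Fin.last K, hmK⟩
        = (Dinv + Dinv * B1ᴴ * G * B1 * Dinv) () () := hBe22
    rw [hL]
    have hinner : ∀ i : Fin K, (∑ j, Am i j * c j)
        = if h : m i.castSucc = true
            then ∑ b : {t : Fin K // m t.castSucc = true}, G ⟨i, h⟩ b * c (b : Fin K) else 0 := by
      intro i
      by_cases h : m i.castSucc = true
      · rw [dif_pos h]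
        have h1 : (∑ j, Am i j * c j)
            = ∑ j, (if hj : m j.castSucc = true then G ⟨i, h⟩ ⟨j, hj⟩ * c j else 0) := by
          refine Finset.sum_congr rfl fun j _ => ?_
          rw [hAmEntry, dif_pos h]
          by_cases hj : m j.castSucc = true
          · rw [dif_pos hj, dif_pos hj]
          · rw [dif_neg hj, dif_neg hj, zero_mul]
        rw [h1]
        exact sum_dite_subtype (fun t => m t.castSucc) (fun b => G ⟨i, h⟩ b * c (b : Fin K))
      · rw [dif_neg h]
        refine Finset.sum_eq_zero fun j _ => ?_
        rw [hAmEntry, dif_neg h, zero_mul]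
    have hdp : c ⬝ᵥ Am *ᵥ c
        = ∑ a : {t : Fin K // m t.castSucc = true},
            c (a : Fin K) * ∑ b : {t : Fin K // m t.castSucc = true}, G a b * c (b : Fin K) := by
      show (∑ i, c i * ∑ j, Am i j * c j) = _
      have h1 : (∑ i, c i * ∑ j, Am i j * c j)
          = ∑ i, (if h : m i.castSucc = true
              then c i * ∑ b : {t : Fin K // m t.castSucc = true}, G ⟨i, h⟩ b * c (b : Fin K)
              else 0) := by
        refine Finset.sum_congr rfl fun i _ => ?_
        rw [hinner]
        by_cases h : m i.castSucc = true
        · rw [dif_pos h, dif_pos h]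
        · rw [dif_neg h, dif_neg h, mul_zero]
      rw [h1]
      exact sum_dite_subtype (fun t => m t.castSucc)
        (fun a => c (a : Fin K) * ∑ b : {t : Fin K // m t.castSucc = true}, G a b * c (b : Fin K))
    rw [hdp]
    simp only [Matrix.add_apply, Matrix.mul_apply, Finset.univ_unique, Finset.sum_singleton,
      hB1, hDinvdef, Matrix.of_apply, conjTranspose_apply, star_trivial]
    rw [Finset.mul_sum]
    simp only [Finset.sum_mul, Finset.mul_sum]
    rw [Finset.sum_comm]
    congr 1
    refine Finset.sum_congr rfl fun a _ => Finset.sum_congr rfl fun b _ => by ring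
end

section
/- Law of total variance decomposition for comparing variances: for random vectors Z(0),...,Z(J) with finite second moments on a probability space with a discrete random variable S, and probability weights π_0,...,π_J summing to 1, the matrix Σ_j π_j E[Z(j) Z(j)^T] − (Σ_j π_j E[Z(j)])(Σ_j π_j E[Z(j)])^T − [Σ_j π_j E[Var(Z(j)|S)] + Var(Σ_j π_j E[Z(j)|S])] equals E[U (diag(π) − π π^T) U^T], where U is the random matrix with columns E[Z(j)|S], j = 0,...,J; in particular it is positive semi-definite. -/
open Matrix BigOperators Finset

/-- Expectation of a (vector/matrix-valued) random element on a finite probability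
space with weights `μ`. -/
noncomputable def pExp {Ω : Type*} [Fintype Ω] (μ : Ω → ℝ)
    {α : Type*} [AddCommMonoid α] [Module ℝ α] (f : Ω → α) : α :=
  ∑ ω, μ ω • f ω

/-- Conditional expectation given the discrete random variable `S`: at `ω`, the
`μ`-weighted average of `f` over the event `{S = S ω}`. -/
noncomputable def pCondExp {Ω : Type*} [Fintype Ω] (μ : Ω → ℝ)
    {R : ℕ} (S : Ω → Fin R)
    {α : Type*} [AddCommMonoid α] [Module ℝ α] (f : Ω → α) : Ω → α :=
  fun ω => (∑ ω' ∈ Finset.univ.filter (fun ω' => S ω' = S ω), μ ω')⁻¹ •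
    ∑ ω' ∈ Finset.univ.filter (fun ω' => S ω' = S ω), μ ω' • f ω'

section Aux

variable {Ω : Type*} [Fintype Ω] (μ : Ω → ℝ) {R : ℕ} (S : Ω → Fin R)
variable {α : Type*} [AddCommGroup α] [Module ℝ α]

lemma pExp_sub (f g : Ω → α) :
    pExp μ (fun ω => f ω - g ω) = pExp μ f - pExp μ g := by
  simp [pExp, smul_sub, Finset.sum_sub_distrib]

lemma pExp_sum_smul {ι : Type*} [Fintype ι] (c : ι → ℝ) (g : ι → Ω → α) :
    pExp μ (fun ω => ∑ j, c j • g j ω) = ∑ j, c j • pExp μ (g j) := by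
  simp only [pExp, Finset.smul_sum]
  rw [Finset.sum_comm]
  refine Finset.sum_congr rfl fun j _ => ?_
  refine Finset.sum_congr rfl fun ω _ => ?_
  rw [smul_comm]

lemma pExp_pCondExp (hμ0 : ∀ ω, 0 ≤ μ ω) (f : Ω → α) :
    pExp μ (pCondExp μ S f) = pExp μ f := by
  classical
  unfold pExp
  rw [← Finset.sum_fiberwise Finset.univ S (fun ω => μ ω • pCondExp μ S f ω),
      ← Finset.sum_fiberwise Finset.univ S (fun ω => μ ω • f ω)]
  refine Finset.sum_congr rfl fun s _ => ?_
  have h1 : ∀ ω ∈ Finset.univ.filter (fun ω => S ω = s),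
      μ ω • pCondExp μ S f ω =
        μ ω • ((∑ ω' ∈ Finset.univ.filter (fun ω' => S ω' = s), μ ω')⁻¹ •
          ∑ ω' ∈ Finset.univ.filter (fun ω' => S ω' = s), μ ω' • f ω') := by
    intro ω hω
    have hs : S ω = s := (Finset.mem_filter.mp hω).2
    simp [pCondExp, hs]
  rw [Finset.sum_congr rfl h1, ← Finset.sum_smul]
  by_cases hw : (∑ ω' ∈ Finset.univ.filter (fun ω' => S ω' = s), μ ω') = 0
  · have hz : ∀ ω ∈ Finset.univ.filter (fun ω' => S ω' = s), μ ω = 0 := fun ω hω =>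
      (Finset.sum_eq_zero_iff_of_nonneg (fun ω _ => hμ0 ω)).mp hw ω hω
    rw [hw, zero_smul, Finset.sum_eq_zero]
    intro ω hω
    rw [hz ω hω, zero_smul]
  · rw [smul_smul, mul_inv_cancel₀ hw, one_smul]

lemma pExp_posSemidef {n : ℕ} (hμ0 : ∀ ω, 0 ≤ μ ω)
    (f : Ω → Matrix (Fin n) (Fin n) ℝ) (h : ∀ ω, (f ω).PosSemidef) :
    (pExp μ f).PosSemidef := by
  unfold pExp
  refine Finset.sum_induction _ _ (fun A B hA hB => hA.add hB) Matrix.PosSemidef.zero ?_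
  intro ω _
  rw [Matrix.posSemidef_iff_dotProduct_mulVec]
  constructor
  · show (μ ω • f ω)ᴴ = μ ω • f ω
    rw [Matrix.conjTranspose_smul, (h ω).1, star_trivial]
  · intro x
    have := (Matrix.posSemidef_iff_dotProduct_mulVec.mp (h ω)).2 x
    rw [Matrix.smul_mulVec, dotProduct_smul, smul_eq_mul]
    exact mul_nonneg (hμ0 ω) this

end Aux

lemma diag_sub_psd {J : ℕ} (pi : Fin (J+1) → ℝ) (hπ0 : ∀ j, 0 ≤ pi j)
    (hπ1 : ∑ j, pi j = 1) :
    (Matrix.diagonal pi - Matrix.vecMulVec pi pi).PosSemidef := by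
  rw [Matrix.posSemidef_iff_dotProduct_mulVec]
  constructor
  · ext i j
    simp only [Matrix.conjTranspose_apply, Matrix.sub_apply, Matrix.diagonal_apply,
      Matrix.vecMulVec_apply, star_trivial]
    rw [mul_comm]
    by_cases h : i = j
    · subst h; rfl
    · simp [h, Ne.symm h]
  · intro x
    have key : star x ⬝ᵥ (Matrix.diagonal pi - Matrix.vecMulVec pi pi) *ᵥ x =
        ∑ j, pi j * (x j - ∑ j', pi j' * x j') ^ 2 := by
      set m := ∑ j', pi j' * x j' with hm
      have lhs : star x ⬝ᵥ (Matrix.diagonal pi - Matrix.vecMulVec pi pi) *ᵥ x =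
          (∑ j, pi j * x j ^ 2) - m * m := by
        simp only [dotProduct, Matrix.mulVec, star_trivial]
        have inner : ∀ i, x i * ∑ k, ((Matrix.diagonal pi - Matrix.vecMulVec pi pi) i k * x k)
            = pi i * x i ^ 2 - (pi i * x i) * m := by
          intro i
          have h2 : ∑ k, ((Matrix.diagonal pi - Matrix.vecMulVec pi pi) i k * x k)
              = pi i * x i - pi i * m := by
            simp only [Matrix.sub_apply, Matrix.diagonal_apply, Matrix.vecMulVec_apply,
              sub_mul, Finset.sum_sub_distrib, ite_mul, zero_mul, Finset.sum_ite_eq,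
              Finset.mem_univ, if_true, hm, Finset.mul_sum, mul_assoc]
          rw [h2]; ring
        rw [Finset.sum_congr rfl fun i _ => inner i, Finset.sum_sub_distrib,
          ← Finset.sum_mul, ← hm]
      have rhs : ∑ j, pi j * (x j - m) ^ 2 = (∑ j, pi j * x j ^ 2) - m * m := by
        have expand : ∀ j, pi j * (x j - m) ^ 2
            = pi j * x j ^ 2 - 2 * m * (pi j * x j) + m * m * pi j := by
          intro j; ring
        rw [Finset.sum_congr rfl fun j _ => expand j]
        rw [Finset.sum_add_distrib, Finset.sum_sub_distrib, ← Finset.mul_sum, ← Finset.mul_sum,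
          ← hm, hπ1]
        ring
      rw [lhs, rhs]
    rw [key]
    exact Finset.sum_nonneg fun j _ => mul_nonneg (hπ0 j) (sq_nonneg _)

/-- Lemma 3, final identity: for random vectors `Z(0), …, Z(J)` and a
discrete `S`, with probability weights `π`,
`∑_j π_j E[Z(j)Z(j)ᵀ] − (∑_j π_j E[Z(j)])(∑_j π_j E[Z(j)])ᵀ
  − (∑_j π_j E[Var(Z(j)|S)] + Var(∑_j π_j E[Z(j)|S]))
  = E[U (diag(π) − ππᵀ) Uᵀ]`,
where `U` has columns `E[Z(j)|S]`; in particular it is positive semi-definite. -/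
theorem stmt17 (Ω : Type) [Fintype Ω] (μ : Ω → ℝ)
    (hμ0 : ∀ ω, 0 ≤ μ ω) (hμ1 : ∑ ω, μ ω = 1)
    (R q J : ℕ) (S : Ω → Fin R)
    (Z : Fin (J+1) → Ω → Fin q → ℝ)
    (pi : Fin (J+1) → ℝ) (hπ0 : ∀ j, 0 ≤ pi j) (hπ1 : ∑ j, pi j = 1) :
    let EZZT : Fin (J+1) → Matrix (Fin q) (Fin q) ℝ := fun j =>
      pExp μ (fun ω => Matrix.vecMulVec (Z j ω) (Z j ω))
    let EZ : Fin (J+1) → Fin q → ℝ := fun j => pExp μ (Z j)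
    let cE : Fin (J+1) → Ω → Fin q → ℝ := fun j => pCondExp μ S (Z j)
    let condVar : Fin (J+1) → Ω → Matrix (Fin q) (Fin q) ℝ := fun j ω =>
      pCondExp μ S (fun ω' => Matrix.vecMulVec (Z j ω') (Z j ω')) ω
        - Matrix.vecMulVec (cE j ω) (cE j ω)
    let W : Ω → Fin q → ℝ := fun ω => ∑ j, pi j • cE j ω
    let VarW : Matrix (Fin q) (Fin q) ℝ :=
      pExp μ (fun ω => Matrix.vecMulVec (W ω) (W ω))
        - Matrix.vecMulVec (pExp μ W) (pExp μ W)
    let U : Ω → Matrix (Fin q) (Fin (J+1)) ℝ := fun ω =>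
      Matrix.of fun i j => cE j ω i
    let LHS : Matrix (Fin q) (Fin q) ℝ :=
      (∑ j, pi j • EZZT j)
        - Matrix.vecMulVec (∑ j, pi j • EZ j) (∑ j, pi j • EZ j)
        - ((∑ j, pi j • pExp μ (condVar j)) + VarW)
    LHS = pExp μ
        (fun ω => U ω * (Matrix.diagonal pi - Matrix.vecMulVec pi pi) * (U ω)ᵀ) ∧
    LHS.PosSemidef := by
  intro EZZT EZ cE condVar W VarW U LHS
  -- tower property for each Z j
  have f1 : ∀ j, pExp μ (condVar j) =
      EZZT j - pExp μ (fun ω => Matrix.vecMulVec (cE j ω) (cE j ω)) := by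
    intro j
    have h := pExp_sub μ (pCondExp μ S (fun ω' => Matrix.vecMulVec (Z j ω') (Z j ω')))
      (fun ω => Matrix.vecMulVec (cE j ω) (cE j ω))
    rw [pExp_pCondExp μ S hμ0] at h
    exact h
  have f2 : pExp μ W = ∑ j, pi j • EZ j := by
    have h := pExp_sum_smul μ pi (fun j ω => cE j ω)
    rw [Finset.sum_congr rfl (fun j _ => by rw [pExp_pCondExp μ S hμ0 (Z j)])] at h
    exact h
  have hLHS : LHS = (∑ j, pi j • pExp μ (fun ω => Matrix.vecMulVec (cE j ω) (cE j ω)))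
      - pExp μ (fun ω => Matrix.vecMulVec (W ω) (W ω)) := by
    show (∑ j, pi j • EZZT j)
        - Matrix.vecMulVec (∑ j, pi j • EZ j) (∑ j, pi j • EZ j)
        - ((∑ j, pi j • pExp μ (condVar j))
          + (pExp μ (fun ω => Matrix.vecMulVec (W ω) (W ω))
            - Matrix.vecMulVec (pExp μ W) (pExp μ W))) = _
    rw [f2]
    simp only [f1, smul_sub, Finset.sum_sub_distrib]
    abel
  have hstep2 : (∑ j, pi j • pExp μ (fun ω => Matrix.vecMulVec (cE j ω) (cE j ω)))
      - pExp μ (fun ω => Matrix.vecMulVec (W ω) (W ω))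
      = pExp μ (fun ω => (∑ j, pi j • Matrix.vecMulVec (cE j ω) (cE j ω))
          - Matrix.vecMulVec (W ω) (W ω)) := by
    rw [pExp_sub, pExp_sum_smul]
  have hpt : ∀ ω, U ω * (Matrix.diagonal pi - Matrix.vecMulVec pi pi) * (U ω)ᵀ
      = (∑ j, pi j • Matrix.vecMulVec (cE j ω) (cE j ω))
        - Matrix.vecMulVec (W ω) (W ω) := by
    intro ω
    ext i k
    simp only [Matrix.mul_apply, Matrix.sub_apply, Matrix.diagonal_apply,
      Matrix.vecMulVec_apply, Matrix.transpose_apply, Matrix.of_apply,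
      Matrix.sum_apply, Matrix.smul_apply, smul_eq_mul]
    have hWi : ∀ i', W ω i' = ∑ j, pi j * cE j ω i' := by
      intro i'
      simp [W, Finset.sum_apply]
    rw [hWi, hWi]
    have hU : ∀ (a : Fin q) (b : Fin (J+1)), U ω a b = cE b ω a := fun a b => rfl
    simp only [hU]
    have inner : ∀ j', (∑ j, cE j ω i * ((if j = j' then pi j else 0) - pi j * pi j'))
        * cE j' ω k
        = pi j' * cE j' ω i * cE j' ω k
          - (∑ j, pi j * cE j ω i) * (pi j' * cE j' ω k) := by
      intro j'
      have e1 : (∑ j, cE j ω i * ((if j = j' then pi j else 0) - pi j * pi j'))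
          = cE j' ω i * pi j' - (∑ j, pi j * cE j ω i) * pi j' := by
        rw [Finset.sum_congr rfl (fun j _ =>
          show cE j ω i * ((if j = j' then pi j else 0) - pi j * pi j')
            = (if j = j' then cE j ω i * pi j else 0) - (pi j * cE j ω i) * pi j' from by
          by_cases h : j = j' <;> simp [h] <;> ring)]
        rw [Finset.sum_sub_distrib,
          Finset.sum_ite_eq' Finset.univ j' (fun j => cE j ω i * pi j), ← Finset.sum_mul]
        simp
      rw [e1]; ring
    rw [Finset.sum_congr rfl (fun j' _ => inner j'), Finset.sum_sub_distrib]
    congr 1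
    · exact Finset.sum_congr rfl fun j' _ => by ring
    · rw [← Finset.mul_sum]
  have key : LHS = pExp μ
      (fun ω => U ω * (Matrix.diagonal pi - Matrix.vecMulVec pi pi) * (U ω)ᵀ) := by
    rw [hLHS, hstep2]
    exact congrArg (pExp μ) (funext fun ω => (hpt ω).symm)
  refine ⟨key, ?_⟩
  rw [key]
  refine pExp_posSemidef μ hμ0 _ fun ω => ?_
  have hM := diag_sub_psd pi hπ0 hπ1
  have := hM.mul_mul_conjTranspose_same (U ω)
  simpa using this
end

section
/- Woodbury-style inversion for the IMMRM Hessian: let W_0, ..., W_J be K×K positive definite matrices, δ_1,...,δ_J the standard basis of ℝ^J, and 1_J the all-ones vector. Define H = Σ_{j=1}^J W_j ⊗ δ_j δ_j^T − (Σ_{j=1}^J W_j ⊗ δ_j)(Σ_{j=0}^J W_j)^{-1}(Σ_{j=1}^J W_j ⊗ δ_j^T) as a JK×JK matrix, assuming Σ_{j=0}^J W_j is invertible. Then H is invertible with H^{-1} = Σ_{j=1}^J W_j^{-1} ⊗ δ_j δ_j^T + W_0^{-1} ⊗ 1_J 1_J^T. -/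
open Matrix Kronecker

lemma vv_mul_vv {n m p : Type*} [Fintype m] (a : n → ℝ) (b c : m → ℝ) (d : p → ℝ) :
    vecMulVec a b * vecMulVec c d = (b ⬝ᵥ c) • vecMulVec a d := by
  ext i j
  simp only [mul_apply, vecMulVec_apply, Matrix.smul_apply, dotProduct, Finset.sum_mul, smul_eq_mul]
  exact Finset.sum_congr rfl fun k _ => by ring

lemma kron_sum_right {l m n p ι : Type*} [Fintype l] [Fintype n] (s : Finset ι)
    (A : Matrix l m ℝ) (f : ι → Matrix n p ℝ) :
    A ⊗ₖ (∑ i ∈ s, f i) = ∑ i ∈ s, A ⊗ₖ f i := by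
  ext ⟨i, j⟩ ⟨k, l⟩
  simp [Matrix.sum_apply, Finset.mul_sum]

lemma kron_sum_left {l m n p ι : Type*} [Fintype l] [Fintype n] (s : Finset ι)
    (f : ι → Matrix l m ℝ) (A : Matrix n p ℝ) :
    (∑ i ∈ s, f i) ⊗ₖ A = ∑ i ∈ s, f i ⊗ₖ A := by
  ext ⟨i, j⟩ ⟨k, l⟩
  simp [Matrix.sum_apply, Finset.sum_mul]

lemma sub_kron {l m n p : Type*} (A B : Matrix l m ℝ) (C : Matrix n p ℝ) :
    (A - B) ⊗ₖ C = A ⊗ₖ C - B ⊗ₖ C := by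
  ext ⟨i, j⟩ ⟨k, l⟩
  simp [sub_mul]

lemma sum_vv_single (J : ℕ) :
    ∑ j : Fin J, vecMulVec (Pi.single j (1:ℝ)) (Pi.single j 1) = 1 := by
  ext i k
  simp [Matrix.sum_apply, vecMulVec_apply, Pi.single_apply, one_apply, Finset.sum_ite_eq,
    ite_and, eq_comm]

lemma sum_vv_one {n : Type*} (J : ℕ) (x : n → ℝ) :
    ∑ b : Fin J, vecMulVec x (Pi.single b (1:ℝ)) = vecMulVec x (fun _ => 1) := by
  ext i k
  simp [Matrix.sum_apply, vecMulVec_apply, Pi.single_apply, Finset.mul_sum]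

/-- Woodbury-style inversion for the IMMRM Hessian: for positive
definite `W_0, …, W_J` with `∑_j W_j` invertible, the `JK × JK` matrix
`H = ∑_{j=1}^J W_j ⊗ δ_jδ_jᵀ − (∑_{j=1}^J W_j ⊗ δ_j)(∑_{j=0}^J W_j)⁻¹(∑_{j=1}^J W_j ⊗ δ_jᵀ)`
is invertible with `H⁻¹ = ∑_{j=1}^J W_j⁻¹ ⊗ δ_jδ_jᵀ + W_0⁻¹ ⊗ 1_J1_Jᵀ`. -/
theorem stmt18 (K J : ℕ) (W : Fin (J+1) → Matrix (Fin K) (Fin K) ℝ)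
    (hW : ∀ j, (W j).PosDef) (hsum : IsUnit (∑ j, W j).det) :
    let δ : Fin J → Fin J → ℝ := fun j => Pi.single j 1
    let H : Matrix (Fin K × Fin J) (Fin K × Fin J) ℝ :=
      (∑ j : Fin J, W j.succ ⊗ₖ Matrix.vecMulVec (δ j) (δ j))
        - (∑ j : Fin J, W j.succ ⊗ₖ Matrix.replicateCol Unit (δ j))
          * ((∑ j : Fin (J+1), W j)⁻¹ ⊗ₖ (1 : Matrix Unit Unit ℝ))
          * (∑ j : Fin J, W j.succ ⊗ₖ Matrix.replicateRow Unit (δ j))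
    IsUnit H.det ∧
    H⁻¹ = (∑ j : Fin J, (W j.succ)⁻¹ ⊗ₖ Matrix.vecMulVec (δ j) (δ j))
        + (W 0)⁻¹ ⊗ₖ Matrix.vecMulVec (fun _ => (1 : ℝ)) (fun _ => (1 : ℝ)) := by
  intro δ H
  have hWu : ∀ j, IsUnit (W j).det := fun j => (hW j).det_pos.ne'.isUnit
  have hWinv : ∀ j : Fin (J+1), W j * (W j)⁻¹ = 1 := fun j => mul_nonsing_inv _ (hWu j)
  have hS : (∑ j, W j)⁻¹ * (∑ j, W j) = 1 := nonsing_inv_mul _ hsum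
  have hdot : ∀ a b : Fin J, (Pi.single a (1:ℝ)) ⬝ᵥ (Pi.single b 1) =
      if b = a then (1:ℝ) else 0 := by
    intro a b
    simp [dotProduct, Pi.single_apply, ite_and, eq_comm]
  have hdot1 : ∀ a : Fin J, (Pi.single a (1:ℝ)) ⬝ᵥ (fun _ => (1:ℝ)) = 1 := by
    intro a; simp [dotProduct, Pi.single_apply]
  have hsumsucc : ∑ b : Fin J, W b.succ = (∑ j, W j) - W 0 := by
    rw [Fin.sum_univ_succ]; abel
  have hkey : H * ((∑ j : Fin J, (W j.succ)⁻¹ ⊗ₖ Matrix.vecMulVec (δ j) (δ j))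
        + (W 0)⁻¹ ⊗ₖ Matrix.vecMulVec (fun _ => (1 : ℝ)) (fun _ => (1 : ℝ))) = 1 := by
    show ((∑ j : Fin J, W j.succ ⊗ₖ Matrix.vecMulVec (Pi.single j 1) (Pi.single j 1))
        - (∑ j : Fin J, W j.succ ⊗ₖ Matrix.replicateCol Unit (Pi.single j 1))
          * ((∑ j : Fin (J+1), W j)⁻¹ ⊗ₖ (1 : Matrix Unit Unit ℝ))
          * (∑ j : Fin J, W j.succ ⊗ₖ Matrix.replicateRow Unit (Pi.single j 1)))
        * ((∑ j : Fin J, (W j.succ)⁻¹ ⊗ₖ Matrix.vecMulVec (Pi.single j 1) (Pi.single j 1))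
          + (W 0)⁻¹ ⊗ₖ Matrix.vecMulVec (fun _ => (1 : ℝ)) (fun _ => (1 : ℝ))) = 1
    have hUMV : (∑ j : Fin J, W j.succ ⊗ₖ Matrix.replicateCol Unit (Pi.single j 1))
          * ((∑ j : Fin (J+1), W j)⁻¹ ⊗ₖ (1 : Matrix Unit Unit ℝ))
          * (∑ j : Fin J, W j.succ ⊗ₖ Matrix.replicateRow Unit (Pi.single j 1))
        = ∑ a : Fin J, ∑ b : Fin J, (W a.succ * (∑ j, W j)⁻¹ * W b.succ) ⊗ₖ
            Matrix.vecMulVec (Pi.single a 1) (Pi.single b 1) := by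
      rw [Matrix.sum_mul, Matrix.sum_mul]
      refine Finset.sum_congr rfl fun a _ => ?_
      rw [Matrix.mul_sum]
      refine Finset.sum_congr rfl fun b _ => ?_
      rw [← mul_kronecker_mul, ← mul_kronecker_mul, Matrix.mul_one, ← vecMulVec_eq]
    rw [hUMV, sub_mul, mul_add, mul_add]
    have h1 : (∑ j : Fin J, W j.succ ⊗ₖ Matrix.vecMulVec (Pi.single j 1) (Pi.single j 1))
        * (∑ j : Fin J, (W j.succ)⁻¹ ⊗ₖ Matrix.vecMulVec (Pi.single j 1) (Pi.single j 1))
        = 1 := by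
      rw [Finset.sum_mul_sum]
      have key : ∀ a b : Fin J,
          (W a.succ ⊗ₖ Matrix.vecMulVec (Pi.single a (1:ℝ)) (Pi.single a 1))
          * ((W b.succ)⁻¹ ⊗ₖ Matrix.vecMulVec (Pi.single b 1) (Pi.single b 1))
          = if b = a then (W a.succ * (W b.succ)⁻¹) ⊗ₖ
              Matrix.vecMulVec (Pi.single a 1) (Pi.single b 1) else 0 := by
        intro a b
        rw [← mul_kronecker_mul, vv_mul_vv, hdot, kronecker_smul, ite_smul, one_smul, zero_smul]
      simp only [key, Finset.sum_ite_eq, Finset.sum_ite_eq', Finset.mem_univ, if_true]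
      have h2 : ∀ a : Fin J, W a.succ * (W a.succ)⁻¹ = 1 := fun a => hWinv _
      simp only [h2]
      rw [← kron_sum_right, sum_vv_single, one_kronecker_one]
    have h2 : (∑ j : Fin J, W j.succ ⊗ₖ Matrix.vecMulVec (Pi.single j 1) (Pi.single j 1))
        * ((W 0)⁻¹ ⊗ₖ Matrix.vecMulVec (fun _ => (1 : ℝ)) (fun _ => (1 : ℝ)))
        = ∑ a : Fin J, (W a.succ * (W 0)⁻¹) ⊗ₖ
            Matrix.vecMulVec (Pi.single a 1) (fun _ => (1:ℝ)) := by
      rw [Finset.sum_mul]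
      refine Finset.sum_congr rfl fun a _ => ?_
      rw [← mul_kronecker_mul, vv_mul_vv, hdot1, one_smul]
    have h3 : (∑ a : Fin J, ∑ b : Fin J, (W a.succ * (∑ j, W j)⁻¹ * W b.succ) ⊗ₖ
            Matrix.vecMulVec (Pi.single a 1) (Pi.single b 1))
        * (∑ j : Fin J, (W j.succ)⁻¹ ⊗ₖ Matrix.vecMulVec (Pi.single j 1) (Pi.single j 1))
        = ∑ a : Fin J, (W a.succ * (∑ j, W j)⁻¹) ⊗ₖ
            Matrix.vecMulVec (Pi.single a 1) (fun _ => (1:ℝ)) := by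
      rw [Finset.sum_mul]
      refine Finset.sum_congr rfl fun a _ => ?_
      rw [Finset.sum_mul_sum]
      have key : ∀ b i : Fin J,
          ((W a.succ * (∑ j, W j)⁻¹ * W b.succ) ⊗ₖ
            Matrix.vecMulVec (Pi.single a (1:ℝ)) (Pi.single b 1))
          * ((W i.succ)⁻¹ ⊗ₖ Matrix.vecMulVec (Pi.single i 1) (Pi.single i 1))
          = if i = b then (W a.succ * (∑ j, W j)⁻¹ * W b.succ * (W i.succ)⁻¹) ⊗ₖ
              Matrix.vecMulVec (Pi.single a 1) (Pi.single i 1) else 0 := by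
        intro b i
        rw [← mul_kronecker_mul, vv_mul_vv, hdot, kronecker_smul, ite_smul, one_smul, zero_smul]
      simp only [key, Finset.sum_ite_eq, Finset.sum_ite_eq', Finset.mem_univ, if_true]
      have h4 : ∀ b : Fin J, W a.succ * (∑ j, W j)⁻¹ * W b.succ * (W b.succ)⁻¹
          = W a.succ * (∑ j, W j)⁻¹ := by
        intro b; rw [mul_assoc, hWinv, mul_one]
      simp only [h4]
      rw [← kron_sum_right, sum_vv_one]
    have h4 : (∑ a : Fin J, ∑ b : Fin J, (W a.succ * (∑ j, W j)⁻¹ * W b.succ) ⊗ₖ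
            Matrix.vecMulVec (Pi.single a 1) (Pi.single b 1))
        * ((W 0)⁻¹ ⊗ₖ Matrix.vecMulVec (fun _ => (1 : ℝ)) (fun _ => (1 : ℝ)))
        = ∑ a : Fin J, (W a.succ * (W 0)⁻¹ - W a.succ * (∑ j, W j)⁻¹) ⊗ₖ
            Matrix.vecMulVec (Pi.single a 1) (fun _ => (1:ℝ)) := by
      rw [Finset.sum_mul]
      refine Finset.sum_congr rfl fun a _ => ?_
      rw [Finset.sum_mul]
      have key : ∀ b : Fin J,
          ((W a.succ * (∑ j, W j)⁻¹ * W b.succ) ⊗ₖ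
            Matrix.vecMulVec (Pi.single a (1:ℝ)) (Pi.single b 1))
          * ((W 0)⁻¹ ⊗ₖ Matrix.vecMulVec (fun _ => (1 : ℝ)) (fun _ => (1 : ℝ)))
          = (W a.succ * (∑ j, W j)⁻¹ * W b.succ * (W 0)⁻¹) ⊗ₖ
              Matrix.vecMulVec (Pi.single a 1) (fun _ => (1:ℝ)) := by
        intro b
        rw [← mul_kronecker_mul, vv_mul_vv, hdot1, one_smul]
      simp only [key]
      rw [← kron_sum_left]
      congr 1
      have step : ∀ b : Fin J, W a.succ * (∑ j, W j)⁻¹ * W b.succ * (W 0)⁻¹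
          = W a.succ * (∑ j, W j)⁻¹ * (W b.succ * (W 0)⁻¹) := fun b => by
        rw [mul_assoc]
      simp only [step]
      rw [← Finset.mul_sum, ← Finset.sum_mul, hsumsucc, sub_mul, mul_sub, hWinv 0, mul_one,
        mul_assoc (W a.succ), ← mul_assoc (∑ j, W j)⁻¹, hS, one_mul]
    rw [h1, h2, h3, h4]
    simp only [sub_kron]
    rw [Finset.sum_sub_distrib]
    abel
  exact ⟨Matrix.isUnit_det_of_right_inverse hkey, Matrix.inv_eq_right_inv hkey⟩
end
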